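/- arXiv:math/0508085 — 16 statements merged into one kernel-verified Lean document; each statement's English description precedes it below -/
import Mathlib

section
/- Boas–Bellman inequality: If x, y_1, ..., y_n are vectors in an inner product space (H, ⟨·,·⟩) over the real or complex field, then ∑_{i=1}^n |⟨x, y_i⟩|² ≤ ‖x‖² [ max_{1≤i≤n} ‖y_i‖² + ( ∑_{1≤i≠j≤n} |⟨y_i, y_j⟩|² )^{1/2} ]. -/
set_option maxHeartbeats 1000000 in
/-- Boas–Bellman inequality. -/
theorem boas_bellman_inequality {𝕜 H : Type*} [RCLike 𝕜] [NormedAddCommGroup H]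
    [InnerProductSpace 𝕜 H] {n : ℕ} (hn : 0 < n) (x : H) (y : Fin n → H) :
    ∑ i, ‖(inner 𝕜 x (y i) : 𝕜)‖ ^ 2 ≤
      ‖x‖ ^ 2 *
        ((Finset.univ.sup' (Finset.univ_nonempty_iff.mpr (Fin.pos_iff_nonempty.mp hn))
            fun i => ‖y i‖ ^ 2) +
          Real.sqrt (∑ i, ∑ j ∈ Finset.univ.erase i, ‖(inner 𝕜 (y i) (y j) : 𝕜)‖ ^ 2)) := by
  classical
  set a : Fin n → 𝕜 := fun i => inner 𝕜 x (y i) with ha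
  set S : ℝ := ∑ i, ‖a i‖ ^ 2 with hSdef
  set M : ℝ := Finset.univ.sup' (Finset.univ_nonempty_iff.mpr (Fin.pos_iff_nonempty.mp hn))
      fun i => ‖y i‖ ^ 2 with hM
  set B : ℝ := Real.sqrt (∑ i, ∑ j ∈ Finset.univ.erase i, ‖(inner 𝕜 (y i) (y j) : 𝕜)‖ ^ 2)
    with hBdef
  obtain ⟨i0⟩ := Fin.pos_iff_nonempty.mp hn
  have hMnn : 0 ≤ M := le_trans (sq_nonneg ‖y i0‖)
    (Finset.le_sup' (fun i => ‖y i‖ ^ 2) (Finset.mem_univ i0))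
  have hBnn : 0 ≤ B := Real.sqrt_nonneg _
  have hSnn : 0 ≤ S := Finset.sum_nonneg fun i _ => sq_nonneg _
  rcases eq_or_lt_of_le hSnn with hS0 | hSpos
  · rw [← hS0]
    positivity
  -- main case: S > 0
  set z : H := ∑ i, (starRingEnd 𝕜) (a i) • y i with hz
  have hxz : (inner 𝕜 x z : 𝕜) = (S : 𝕜) := by
    rw [hz, inner_sum]
    simp_rw [inner_smul_right]
    change ∑ i, (starRingEnd 𝕜) (a i) * a i = _
    simp_rw [RCLike.conj_mul]
    rw [hSdef]
    norm_cast
  -- ‖z‖ ^ 2 ≤ S * (M + B)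
  have hzz : (inner 𝕜 z z : 𝕜) =
      ∑ i, ∑ j, (a i * (starRingEnd 𝕜) (a j)) * (inner 𝕜 (y i) (y j) : 𝕜) := by
    rw [hz, sum_inner]
    refine Finset.sum_congr rfl fun i _ => ?_
    rw [inner_sum]
    refine Finset.sum_congr rfl fun j _ => ?_
    rw [inner_smul_left, inner_smul_right, RingHomCompTriple.comp_apply, RingHom.id_apply]
    ring
  have hyy : ∀ i : Fin n, ‖(inner 𝕜 (y i) (y i) : 𝕜)‖ = ‖y i‖ ^ 2 := fun i => by
    rw [inner_self_eq_norm_sq_to_K, norm_pow, RCLike.norm_ofReal, abs_norm]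
  have hznorm : ‖z‖ ^ 2 ≤ ∑ i, ∑ j, ‖a i‖ * ‖a j‖ * ‖(inner 𝕜 (y i) (y j) : 𝕜)‖ := by
    have h1 : (‖z‖ ^ 2 : ℝ) = ‖(inner 𝕜 z z : 𝕜)‖ := by
      rw [inner_self_eq_norm_sq_to_K, norm_pow, RCLike.norm_ofReal, abs_norm]
    rw [h1, hzz]
    refine le_trans (norm_sum_le _ _) (Finset.sum_le_sum fun i _ => ?_)
    refine le_trans (norm_sum_le _ _) (Finset.sum_le_sum fun j _ => ?_)
    rw [norm_mul, norm_mul, RCLike.norm_conj]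
  -- split diagonal and off-diagonal
  have hsplit : ∑ i, ∑ j, ‖a i‖ * ‖a j‖ * ‖(inner 𝕜 (y i) (y j) : 𝕜)‖ =
      (∑ i, ‖a i‖ ^ 2 * ‖y i‖ ^ 2) +
      ∑ i, ∑ j ∈ Finset.univ.erase i, ‖a i‖ * ‖a j‖ * ‖(inner 𝕜 (y i) (y j) : 𝕜)‖ := by
    rw [← Finset.sum_add_distrib]
    refine Finset.sum_congr rfl fun i _ => ?_
    rw [← Finset.add_sum_erase _ _ (Finset.mem_univ i)]
    congr 1
    rw [hyy i]
    ring
  have hdiag : ∑ i, ‖a i‖ ^ 2 * ‖y i‖ ^ 2 ≤ S * M := by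
    rw [hSdef, Finset.sum_mul]
    exact Finset.sum_le_sum fun i _ => mul_le_mul_of_nonneg_left
      (Finset.le_sup' (fun i => ‖y i‖ ^ 2) (Finset.mem_univ i)) (sq_nonneg _)
  have hT : ∑ i, ∑ j ∈ Finset.univ.erase i, (‖a i‖ * ‖a j‖) ^ 2 ≤ S ^ 2 := by
    calc ∑ i, ∑ j ∈ Finset.univ.erase i, (‖a i‖ * ‖a j‖) ^ 2
        ≤ ∑ i, ∑ j, (‖a i‖ * ‖a j‖) ^ 2 :=
          Finset.sum_le_sum fun i _ => Finset.sum_le_sum_of_subset_of_nonneg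
            (Finset.erase_subset _ _) fun _ _ _ => sq_nonneg _
      _ = S ^ 2 := by
          rw [hSdef, sq, Finset.sum_mul_sum]
          exact Finset.sum_congr rfl fun i _ => Finset.sum_congr rfl fun j _ =>
            (mul_pow _ _ _)
  have hoff : ∑ i, ∑ j ∈ Finset.univ.erase i, ‖a i‖ * ‖a j‖ * ‖(inner 𝕜 (y i) (y j) : 𝕜)‖
      ≤ S * B := by
    rw [Finset.sum_sigma']
    calc ∑ p ∈ Finset.univ.sigma (fun i => Finset.univ.erase i),
          ‖a p.1‖ * ‖a p.2‖ * ‖(inner 𝕜 (y p.1) (y p.2) : 𝕜)‖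
        ≤ Real.sqrt (∑ p ∈ Finset.univ.sigma (fun i => Finset.univ.erase i),
              (‖a p.1‖ * ‖a p.2‖) ^ 2) *
          Real.sqrt (∑ p ∈ Finset.univ.sigma (fun i => Finset.univ.erase i),
              ‖(inner 𝕜 (y p.1) (y p.2) : 𝕜)‖ ^ 2) :=
          Real.sum_mul_le_sqrt_mul_sqrt _ _ _
      _ ≤ S * B := by
          have hB' : Real.sqrt (∑ p ∈ Finset.univ.sigma (fun i => Finset.univ.erase i),
              ‖(inner 𝕜 (y p.1) (y p.2) : 𝕜)‖ ^ 2) = B := by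
            rw [hBdef, Finset.sum_sigma']
          rw [hB']
          refine mul_le_mul_of_nonneg_right ?_ hBnn
          calc Real.sqrt (∑ p ∈ Finset.univ.sigma (fun i => Finset.univ.erase i),
                (‖a p.1‖ * ‖a p.2‖) ^ 2)
              ≤ Real.sqrt (S ^ 2) := Real.sqrt_le_sqrt (by rw [Finset.sum_sigma'] at hT; exact hT)
            _ = S := Real.sqrt_sq hSnn
  have hz2 : ‖z‖ ^ 2 ≤ S * (M + B) := by
    rw [mul_add]
    calc ‖z‖ ^ 2 ≤ _ := hznorm
      _ = _ := hsplit
      _ ≤ S * M + S * B := add_le_add hdiag hoff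
  -- conclude
  have hkey : S * S ≤ (‖x‖ ^ 2 * (M + B)) * S := by
    have h1 : S = ‖(inner 𝕜 x z : 𝕜)‖ := by
      rw [hxz, RCLike.norm_ofReal, abs_of_nonneg hSnn]
    have h2 : S * S = ‖(inner 𝕜 x z : 𝕜)‖ ^ 2 := by rw [← h1]; ring
    rw [h2]
    calc ‖(inner 𝕜 x z : 𝕜)‖ ^ 2 ≤ (‖x‖ * ‖z‖) ^ 2 :=
          pow_le_pow_left₀ (norm_nonneg _) (norm_inner_le_norm (𝕜 := 𝕜) x z) 2
      _ = ‖x‖ ^ 2 * ‖z‖ ^ 2 := by ring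
      _ ≤ ‖x‖ ^ 2 * (S * (M + B)) := mul_le_mul_of_nonneg_left hz2 (sq_nonneg _)
      _ = (‖x‖ ^ 2 * (M + B)) * S := by ring
  exact le_of_mul_le_mul_right hkey hSpos
end

section
/- Bombieri's inequality: If x, y_1, ..., y_n are vectors in an inner product space (H, ⟨·,·⟩) over the real or complex field, then ∑_{i=1}^n |⟨x, y_i⟩|² ≤ ‖x‖² · max_{1≤i≤n} { ∑_{j=1}^n |⟨y_i, y_j⟩| }. -/
/-- Bombieri's inequality. -/
theorem bombieri_inequality {𝕜 H : Type*} [RCLike 𝕜] [NormedAddCommGroup H]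
    [InnerProductSpace 𝕜 H] {n : ℕ} (hn : 0 < n) (x : H) (y : Fin n → H) :
    ∑ i, ‖(inner 𝕜 x (y i) : 𝕜)‖ ^ 2 ≤
      ‖x‖ ^ 2 *
        Finset.univ.sup' (Finset.univ_nonempty_iff.mpr (Fin.pos_iff_nonempty.mp hn))
          (fun i => ∑ j, ‖(inner 𝕜 (y i) (y j) : 𝕜)‖) := by
  classical
  set a : Fin n → 𝕜 := fun i => inner 𝕜 x (y i) with ha
  set M : ℝ := Finset.univ.sup' (Finset.univ_nonempty_iff.mpr (Fin.pos_iff_nonempty.mp hn))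
          (fun i => ∑ j, ‖(inner 𝕜 (y i) (y j) : 𝕜)‖) with hM
  set S : ℝ := ∑ i, ‖a i‖ ^ 2 with hSdef
  set b : Fin n → Fin n → ℝ := fun i j => ‖(inner 𝕜 (y i) (y j) : 𝕜)‖ with hb
  have hb0 : ∀ i j, 0 ≤ b i j := fun i j => norm_nonneg _
  have hbsymm : ∀ i j, b i j = b j i := fun i j => norm_inner_symm (y i) (y j)
  have hS0 : 0 ≤ S := Finset.sum_nonneg fun i _ => sq_nonneg _
  have hM0 : 0 ≤ M := by
    have i0 : Fin n := ⟨0, hn⟩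
    refine le_trans ?_ (Finset.le_sup' _ (Finset.mem_univ i0))
    exact Finset.sum_nonneg fun j _ => norm_nonneg _
  set z : H := ∑ i, (starRingEnd 𝕜 (a i)) • y i with hz
  have hxz : (inner 𝕜 x z : 𝕜) = (S : 𝕜) := by
    rw [hz, inner_sum]
    simp only [inner_smul_right]
    rw [hSdef]
    push_cast
    refine Finset.sum_congr rfl fun i _ => ?_
    rw [RCLike.conj_mul]
  have hSle : S ≤ ‖x‖ * ‖z‖ := by
    calc S = ‖(inner 𝕜 x z : 𝕜)‖ := by rw [hxz]; simp [abs_of_nonneg hS0]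
    _ ≤ ‖x‖ * ‖z‖ := norm_inner_le_norm x z
  have hinzz : (inner 𝕜 z z : 𝕜) =
      ∑ j, (starRingEnd 𝕜 (a j)) * ∑ i, (a i) * (inner 𝕜 (y i) (y j) : 𝕜) := by
    rw [hz, inner_sum]
    refine Finset.sum_congr rfl fun j _ => ?_
    rw [inner_smul_right, sum_inner]
    congr 1
    refine Finset.sum_congr rfl fun i _ => ?_
    rw [inner_smul_left]
    simp
  have hzsq : ‖z‖ ^ 2 ≤ ∑ j, ∑ i, ‖a j‖ * (‖a i‖ * b i j) := by
    have h1 : (‖z‖ : ℝ) ^ 2 = ‖(inner 𝕜 z z : 𝕜)‖ := by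
      rw [inner_self_eq_norm_sq_to_K]
      simp [norm_pow]
    rw [h1, hinzz]
    refine (norm_sum_le _ _).trans (Finset.sum_le_sum fun j _ => ?_)
    rw [norm_mul, RCLike.norm_conj]
    calc ‖a j‖ * ‖∑ i, a i * (inner 𝕜 (y i) (y j) : 𝕜)‖
        ≤ ‖a j‖ * ∑ i, ‖a i‖ * b i j := by
          refine mul_le_mul_of_nonneg_left ?_ (norm_nonneg _)
          refine (norm_sum_le _ _).trans (le_of_eq ?_)
          exact Finset.sum_congr rfl fun i _ => norm_mul _ _
      _ = ∑ i, ‖a j‖ * (‖a i‖ * b i j) := Finset.mul_sum _ _ _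
  have hstep : ∑ j, ∑ i, ‖a j‖ * (‖a i‖ * b i j) ≤ S * M := by
    have h1 : ∀ j, ∀ i : Fin n, ‖a j‖ * (‖a i‖ * b i j) ≤
        (‖a i‖ ^ 2 * b i j + ‖a j‖ ^ 2 * b i j) / 2 := by
      intro j i
      nlinarith [mul_nonneg (sq_nonneg (‖a i‖ - ‖a j‖)) (hb0 i j)]
    calc ∑ j, ∑ i, ‖a j‖ * (‖a i‖ * b i j)
        ≤ ∑ j, ∑ i, (‖a i‖ ^ 2 * b i j + ‖a j‖ ^ 2 * b i j) / 2 :=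
          Finset.sum_le_sum fun j _ => Finset.sum_le_sum fun i _ => h1 j i
      _ = ∑ i, ‖a i‖ ^ 2 * ∑ j, b i j := by
          have e1 : ∀ j i : Fin n, (‖a i‖ ^ 2 * b i j + ‖a j‖ ^ 2 * b i j) / 2
              = ‖a i‖ ^ 2 * b i j / 2 + ‖a j‖ ^ 2 * b j i / 2 := fun j i => by
            rw [hbsymm j i]; ring
          calc ∑ j, ∑ i, (‖a i‖ ^ 2 * b i j + ‖a j‖ ^ 2 * b i j) / 2
              = ∑ j, ∑ i, (‖a i‖ ^ 2 * b i j / 2 + ‖a j‖ ^ 2 * b j i / 2) :=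
                Finset.sum_congr rfl fun j _ => Finset.sum_congr rfl fun i _ => e1 j i
            _ = (∑ j, ∑ i, ‖a i‖ ^ 2 * b i j / 2) + (∑ j, ∑ i, ‖a j‖ ^ 2 * b j i / 2) := by
                rw [← Finset.sum_add_distrib]
                exact Finset.sum_congr rfl fun j _ => Finset.sum_add_distrib
            _ = (∑ i, ∑ j, ‖a i‖ ^ 2 * b i j / 2) + (∑ i, ∑ j, ‖a i‖ ^ 2 * b i j / 2) := by
                congr 1
                exact Finset.sum_comm
            _ = ∑ i, ‖a i‖ ^ 2 * ∑ j, b i j := by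
                rw [← Finset.sum_add_distrib]
                refine Finset.sum_congr rfl fun i _ => ?_
                rw [← Finset.sum_add_distrib, Finset.mul_sum]
                exact Finset.sum_congr rfl fun j _ => by ring
      _ ≤ ∑ i, ‖a i‖ ^ 2 * M := by
          refine Finset.sum_le_sum fun i _ => mul_le_mul_of_nonneg_left ?_ (sq_nonneg _)
          exact Finset.le_sup'
            (fun i => ∑ j, ‖(inner 𝕜 (y i) (y j) : 𝕜)‖) (Finset.mem_univ i)
      _ = S * M := by rw [hSdef, Finset.sum_mul]
  have hzSM : ‖z‖ ^ 2 ≤ S * M := hzsq.trans hstep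
  have hkey : S * S ≤ (‖x‖ ^ 2 * M) * S := by
    have h3 : S * S ≤ (‖x‖ * ‖z‖) * (‖x‖ * ‖z‖) :=
      mul_le_mul hSle hSle hS0 (mul_nonneg (norm_nonneg _) (norm_nonneg _))
    calc S * S ≤ (‖x‖ * ‖z‖) * (‖x‖ * ‖z‖) := h3
      _ = ‖x‖ ^ 2 * ‖z‖ ^ 2 := by ring
      _ ≤ ‖x‖ ^ 2 * (S * M) := mul_le_mul_of_nonneg_left hzSM (sq_nonneg _)
      _ = (‖x‖ ^ 2 * M) * S := by ring
  rcases eq_or_lt_of_le hS0 with hS | hS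
  · exact (hS.symm ▸ mul_nonneg (sq_nonneg _) hM0 : (S : ℝ) ≤ _)
  · exact le_of_mul_le_mul_right hkey hS
end

section
/- Selberg's inequality: If x, y_1, ..., y_n are vectors in an inner product space (H, ⟨·,·⟩) over the real or complex field with y_i ≠ 0 for each i ∈ {1, ..., n}, then ∑_{i=1}^n |⟨x, y_i⟩|² / ( ∑_{j=1}^n |⟨y_i, y_j⟩| ) ≤ ‖x‖². -/
open Finset RCLike

/-- Selberg's inequality. -/
theorem selberg_inequality {𝕜 H : Type*} [RCLike 𝕜] [NormedAddCommGroup H]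
    [InnerProductSpace 𝕜 H] {n : ℕ} (hn : 0 < n) (x : H) (y : Fin n → H)
    (hy : ∀ i, y i ≠ 0) :
    ∑ i, ‖(inner 𝕜 x (y i) : 𝕜)‖ ^ 2 / (∑ j, ‖(inner 𝕜 (y i) (y j) : 𝕜)‖) ≤ ‖x‖ ^ 2 := by
  set D : Fin n → ℝ := fun i => ∑ j, ‖(inner 𝕜 (y i) (y j) : 𝕜)‖ with hDdef
  have hD : ∀ i, 0 < D i := by
    intro i
    have h1 : ‖(inner 𝕜 (y i) (y i) : 𝕜)‖ ≤ D i :=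
      Finset.single_le_sum (f := fun j => ‖(inner 𝕜 (y i) (y j) : 𝕜)‖)
        (fun j _ => norm_nonneg _) (mem_univ i)
    have h2 : 0 < ‖(inner 𝕜 (y i) (y i) : 𝕜)‖ := by
      rw [norm_pos_iff]
      exact fun h => hy i (inner_self_eq_zero.mp h)
    linarith
  set a : Fin n → 𝕜 := fun i => inner 𝕜 x (y i) with hadef
  set c : Fin n → 𝕜 := fun i => (starRingEnd 𝕜) (a i) / ((D i : ℝ) : 𝕜) with hcdef
  set s : H := ∑ i, c i • y i with hsdef
  have hnc : ∀ i, ‖c i‖ = ‖a i‖ / D i := by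
    intro i
    rw [hcdef]
    simp only [norm_div, RCLike.norm_conj, RCLike.norm_ofReal,
      abs_of_pos (hD i)]
  -- the target sum
  set S : ℝ := ∑ i, ‖a i‖ ^ 2 / D i with hSdef
  have hre : re (inner 𝕜 x s : 𝕜) = S := by
    rw [hsdef, inner_sum]
    simp only [inner_smul_right]
    rw [map_sum]
    refine Finset.sum_congr rfl fun i _ => ?_
    have : c i * (inner 𝕜 x (y i) : 𝕜) = ((‖a i‖ ^ 2 / D i : ℝ) : 𝕜) := by
      rw [hcdef]
      rw [div_mul_eq_mul_div, RCLike.conj_mul]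
      push_cast
      ring
    rw [show (inner 𝕜 x (y i) : 𝕜) = a i from rfl] at this ⊢
    rw [this, RCLike.ofReal_re]
  have hs2 : ‖s‖ ^ 2 ≤ S := by
    have h1 : ‖s‖ ^ 2 = ‖(inner 𝕜 s s : 𝕜)‖ := by
      rw [inner_self_eq_norm_sq_to_K]
      rw [norm_pow, RCLike.norm_ofReal, abs_norm]
    have h2 : (inner 𝕜 s s : 𝕜) = ∑ i, ∑ j, (starRingEnd 𝕜) (c i) * c j * inner 𝕜 (y i) (y j) := by
      rw [hsdef, sum_inner]
      refine Finset.sum_congr rfl fun i _ => ?_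
      rw [inner_sum]
      refine Finset.sum_congr rfl fun j _ => ?_
      rw [inner_smul_left, inner_smul_right]
      ring
    have h3 : ‖(inner 𝕜 s s : 𝕜)‖ ≤ ∑ i, ∑ j, ‖c i‖ * ‖c j‖ * ‖(inner 𝕜 (y i) (y j) : 𝕜)‖ := by
      rw [h2]
      refine (norm_sum_le _ _).trans (Finset.sum_le_sum fun i _ => ?_)
      refine (norm_sum_le _ _).trans (Finset.sum_le_sum fun j _ => ?_)
      rw [norm_mul, norm_mul, RCLike.norm_conj]
    have h4 : ∑ i, ∑ j, ‖c i‖ * ‖c j‖ * ‖(inner 𝕜 (y i) (y j) : 𝕜)‖ ≤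
        ∑ i, ∑ j, (‖c i‖ ^ 2 + ‖c j‖ ^ 2) / 2 * ‖(inner 𝕜 (y i) (y j) : 𝕜)‖ := by
      refine Finset.sum_le_sum fun i _ => Finset.sum_le_sum fun j _ => ?_
      have : ‖c i‖ * ‖c j‖ ≤ (‖c i‖ ^ 2 + ‖c j‖ ^ 2) / 2 := by nlinarith [sq_nonneg (‖c i‖ - ‖c j‖)]
      exact mul_le_mul_of_nonneg_right this (norm_nonneg _)
    have h5 : ∑ i, ∑ j, (‖c i‖ ^ 2 + ‖c j‖ ^ 2) / 2 * ‖(inner 𝕜 (y i) (y j) : 𝕜)‖ = S := by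
      have hsplit : ∀ i j, (‖c i‖ ^ 2 + ‖c j‖ ^ 2) / 2 * ‖(inner 𝕜 (y i) (y j) : 𝕜)‖ =
          ‖c i‖ ^ 2 / 2 * ‖(inner 𝕜 (y i) (y j) : 𝕜)‖ + ‖c j‖ ^ 2 / 2 * ‖(inner 𝕜 (y i) (y j) : 𝕜)‖ := by
        intro i j; ring
      simp only [hsplit, Finset.sum_add_distrib]
      have hA : ∑ i, ∑ j, ‖c i‖ ^ 2 / 2 * ‖(inner 𝕜 (y i) (y j) : 𝕜)‖ = S / 2 := by
        rw [hSdef, Finset.sum_div]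
        refine Finset.sum_congr rfl fun i _ => ?_
        rw [← Finset.mul_sum]
        rw [show (∑ j, ‖(inner 𝕜 (y i) (y j) : 𝕜)‖) = D i from rfl]
        rw [hnc i, div_pow]
        have := (hD i).ne'
        field_simp
      have hB : ∑ i, ∑ j, ‖c j‖ ^ 2 / 2 * ‖(inner 𝕜 (y i) (y j) : 𝕜)‖ = S / 2 := by
        rw [Finset.sum_comm]
        rw [← hA]
        refine Finset.sum_congr rfl fun i _ => Finset.sum_congr rfl fun j _ => ?_
        rw [norm_inner_symm]
      rw [hA, hB]; ring
    calc ‖s‖ ^ 2 = ‖(inner 𝕜 s s : 𝕜)‖ := h1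
      _ ≤ _ := h3
      _ ≤ _ := h4
      _ = S := h5
  have h0 : (0:ℝ) ≤ ‖x - s‖ ^ 2 := sq_nonneg _
  rw [@norm_sub_sq 𝕜] at h0
  rw [hre] at h0
  have : S ≤ ‖x‖ ^ 2 := by linarith
  exact this
end

section
/- Dragomir's Boas–Bellman type inequality: For any vectors x, y_1, ..., y_n in an inner product space (H, ⟨·,·⟩) over the real or complex field, one has ∑_{i=1}^n |⟨x, y_i⟩|² ≤ ‖x‖² [ max_{1≤i≤n} ‖y_i‖² + (n−1) · max_{1≤i≠j≤n} |⟨y_i, y_j⟩| ]. -/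
open Finset RCLike

private lemma dragomir_aux {𝕜 H : Type*} [RCLike 𝕜] [NormedAddCommGroup H]
    [InnerProductSpace 𝕜 H] {n : ℕ} (hn : 0 < n) (x : H) (y : Fin n → H)
    (M m : ℝ) (hM0 : 0 ≤ M) (hm0 : 0 ≤ m)
    (hM : ∀ i, ‖y i‖ ^ 2 ≤ M)
    (hm : ∀ i j, i ≠ j → ‖(inner 𝕜 (y i) (y j) : 𝕜)‖ ≤ m) :
    ∑ i, ‖(inner 𝕜 x (y i) : 𝕜)‖ ^ 2 ≤ ‖x‖ ^ 2 * (M + ((n : ℝ) - 1) * m) := by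
  classical
  set a : Fin n → 𝕜 := fun i => inner 𝕜 x (y i) with ha
  set S : ℝ := ∑ i, ‖a i‖ ^ 2 with hSdef
  have hS0 : 0 ≤ S := Finset.sum_nonneg fun i _ => by positivity
  have hn1 : (1 : ℝ) ≤ n := by exact_mod_cast hn
  rcases eq_or_lt_of_le hS0 with h | h
  · rw [← h]
    have : 0 ≤ ((n : ℝ) - 1) * m := mul_nonneg (by linarith) hm0
    positivity
  set z : H := ∑ i, (starRingEnd 𝕜 (a i)) • y i with hz
  have hxz : (inner 𝕜 x z : 𝕜) = (S : 𝕜) := by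
    rw [hz, inner_sum]
    simp only [inner_smul_right]
    rw [hSdef]
    push_cast
    exact Finset.sum_congr rfl fun i _ => RCLike.conj_mul (a i)
  have step2 : S ^ 2 = ‖(inner 𝕜 x z : 𝕜)‖ ^ 2 := by
    rw [hxz, RCLike.norm_ofReal, abs_of_nonneg hS0]
  -- expand ‖z‖²
  have hzz : ‖z‖ ^ 2 = RCLike.re (inner 𝕜 z z : 𝕜) := (inner_self_eq_norm_sq z).symm
  have hexp : (inner 𝕜 z z : 𝕜) = ∑ i, ∑ j, a i * (starRingEnd 𝕜 (a j)) * (inner 𝕜 (y i) (y j) : 𝕜) := by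
    rw [hz, sum_inner]
    refine Finset.sum_congr rfl fun i _ => ?_
    rw [inner_sum]
    refine Finset.sum_congr rfl fun j _ => ?_
    rw [inner_smul_left, inner_smul_right, starRingEnd_self_apply]
    ring
  set T : Fin n → Fin n → ℝ := fun i j => ‖a i‖ * ‖a j‖ * ‖(inner 𝕜 (y i) (y j) : 𝕜)‖ with hT
  have hzbound : ‖z‖ ^ 2 ≤ ∑ i, ∑ j, T i j := by
    rw [hzz, hexp]
    calc RCLike.re (∑ i, ∑ j, a i * (starRingEnd 𝕜 (a j)) * (inner 𝕜 (y i) (y j) : 𝕜))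
        ≤ ‖∑ i, ∑ j, a i * (starRingEnd 𝕜 (a j)) * (inner 𝕜 (y i) (y j) : 𝕜)‖ :=
          RCLike.re_le_norm _
      _ ≤ ∑ i, ∑ j, ‖a i * (starRingEnd 𝕜 (a j)) * (inner 𝕜 (y i) (y j) : 𝕜)‖ := by
          refine (norm_sum_le _ _).trans (Finset.sum_le_sum fun i _ => norm_sum_le _ _)
      _ = ∑ i, ∑ j, T i j := by
          refine Finset.sum_congr rfl fun i _ => Finset.sum_congr rfl fun j _ => ?_
          rw [hT]; simp [norm_mul]
  set A : ℝ := ∑ i, ‖a i‖ with hA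
  have hsplit : ∀ i : Fin n, ∑ j, T i j ≤ ‖a i‖ ^ 2 * M + ‖a i‖ * (A - ‖a i‖) * m := by
    intro i
    rw [← Finset.add_sum_erase _ _ (Finset.mem_univ i)]
    have h1 : T i i ≤ ‖a i‖ ^ 2 * M := by
      have : ‖(inner 𝕜 (y i) (y i) : 𝕜)‖ = ‖y i‖ ^ 2 := by
        rw [inner_self_eq_norm_sq_to_K]
        rw [← RCLike.ofReal_pow, RCLike.norm_ofReal, abs_of_nonneg (by positivity)]
      rw [hT]; simp only [this]
      calc ‖a i‖ * ‖a i‖ * ‖y i‖ ^ 2 ≤ ‖a i‖ * ‖a i‖ * M := by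
            exact mul_le_mul_of_nonneg_left (hM i) (by positivity)
        _ = ‖a i‖ ^ 2 * M := by ring
    have h2 : ∑ j ∈ Finset.univ.erase i, T i j ≤ ‖a i‖ * (A - ‖a i‖) * m := by
      calc ∑ j ∈ Finset.univ.erase i, T i j
          ≤ ∑ j ∈ Finset.univ.erase i, ‖a i‖ * ‖a j‖ * m := by
            refine Finset.sum_le_sum fun j hj => ?_
            have hij : i ≠ j := (Finset.ne_of_mem_erase hj).symm
            exact mul_le_mul_of_nonneg_left (hm i j hij) (by positivity)
        _ = ‖a i‖ * (∑ j ∈ Finset.univ.erase i, ‖a j‖) * m := by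
            rw [Finset.mul_sum, Finset.sum_mul]
        _ = ‖a i‖ * (A - ‖a i‖) * m := by
            rw [hA, ← Finset.add_sum_erase _ _ (Finset.mem_univ i)]
            ring_nf
    linarith
  have hzb2 : ‖z‖ ^ 2 ≤ S * M + (A ^ 2 - S) * m := by
    refine hzbound.trans ?_
    calc ∑ i, ∑ j, T i j ≤ ∑ i, (‖a i‖ ^ 2 * M + ‖a i‖ * (A - ‖a i‖) * m) :=
          Finset.sum_le_sum fun i _ => hsplit i
      _ = S * M + (A ^ 2 - S) * m := by
          rw [Finset.sum_add_distrib, ← Finset.sum_mul, ← hSdef]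
          congr 1
          rw [← Finset.sum_mul]
          congr 1
          rw [hSdef, hA]
          have hre : ∀ i : Fin n, ‖a i‖ * ((∑ j, ‖a j‖) - ‖a i‖)
              = ‖a i‖ * (∑ j, ‖a j‖) - ‖a i‖ ^ 2 := fun i => by ring
          rw [Finset.sum_congr rfl fun i _ => hre i, Finset.sum_sub_distrib,
            ← Finset.sum_mul, sq]
  have hCS : A ^ 2 ≤ (n : ℝ) * S := by
    rw [hA, hSdef]
    have := sq_sum_le_card_mul_sum_sq (s := (Finset.univ : Finset (Fin n))) (f := fun i => ‖a i‖)
    simpa using this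
  have hx0 : (0:ℝ) ≤ ‖x‖ ^ 2 := by positivity
  have key : S * S ≤ (‖x‖ ^ 2 * (M + ((n : ℝ) - 1) * m)) * S := by
    have h3 : ‖(inner 𝕜 x z : 𝕜)‖ ^ 2 ≤ ‖x‖ ^ 2 * ‖z‖ ^ 2 := by
      have := norm_inner_le_norm (𝕜 := 𝕜) x z
      nlinarith [norm_nonneg (inner 𝕜 x z : 𝕜), norm_nonneg x, norm_nonneg z]
    have h4 : ‖z‖ ^ 2 ≤ S * M + ((n:ℝ) - 1) * m * S := by
      have : (A ^ 2 - S) * m ≤ ((n:ℝ) - 1) * S * m := by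
        have : A ^ 2 - S ≤ ((n:ℝ) - 1) * S := by nlinarith
        exact mul_le_mul_of_nonneg_right this hm0
      nlinarith
    nlinarith [mul_le_mul_of_nonneg_left h4 hx0]
  exact le_of_mul_le_mul_right (by linarith [key]) h

/-- Dragomir's Boas–Bellman type inequality. -/
theorem dragomir_boas_bellman_type {𝕜 H : Type*} [RCLike 𝕜] [NormedAddCommGroup H]
    [InnerProductSpace 𝕜 H] {n : ℕ} (hn : 0 < n) (x : H) (y : Fin n → H) :
    ∑ i, ‖(inner 𝕜 x (y i) : 𝕜)‖ ^ 2 ≤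
      ‖x‖ ^ 2 *
        ((Finset.univ.sup' (Finset.univ_nonempty_iff.mpr (Fin.pos_iff_nonempty.mp hn))
            fun i => ‖y i‖ ^ 2) +
          ((n : ℝ) - 1) *
            ⨆ p : {p : Fin n × Fin n // p.1 ≠ p.2}, ‖(inner 𝕜 (y p.1.1) (y p.1.2) : 𝕜)‖) := by
  set M : ℝ := Finset.univ.sup' (Finset.univ_nonempty_iff.mpr (Fin.pos_iff_nonempty.mp hn))
      fun i => ‖y i‖ ^ 2 with hMdef
  set m : ℝ := ⨆ p : {p : Fin n × Fin n // p.1 ≠ p.2}, ‖(inner 𝕜 (y p.1.1) (y p.1.2) : 𝕜)‖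
    with hmdef
  have hM : ∀ i, ‖y i‖ ^ 2 ≤ M := fun i =>
    Finset.le_sup' (fun i => ‖y i‖ ^ 2) (Finset.mem_univ i)
  have hM0 : 0 ≤ M := le_trans (by positivity) (hM ⟨0, hn⟩)
  have hm0 : 0 ≤ m := Real.iSup_nonneg fun p => norm_nonneg _
  have hm : ∀ i j, i ≠ j → ‖(inner 𝕜 (y i) (y j) : 𝕜)‖ ≤ m := by
    intro i j hij
    have hbdd : BddAbove (Set.range fun p : {p : Fin n × Fin n // p.1 ≠ p.2} =>
        ‖(inner 𝕜 (y p.1.1) (y p.1.2) : 𝕜)‖) := Set.Finite.bddAbove (Set.finite_range _)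
    exact le_ciSup hbdd ⟨(i, j), hij⟩
  exact dragomir_aux hn x y M m hM0 hm0 hM hm
end

section
/- Dragomir's (p,q)-Bombieri inequality: Let x, y_1, ..., y_n be vectors in an inner product space (H, ⟨·,·⟩) over the real or complex field with not all ⟨x, y_i⟩ = 0 for i ∈ {1, ..., n}, and let p > 1, q > 1 with 1/p + 1/q = 1. Then ( ∑_{i=1}^n |⟨x, y_i⟩|² )² / [ ( ∑_{i=1}^n |⟨x, y_i⟩|^p )^{1/p} ( ∑_{i=1}^n |⟨x, y_i⟩|^q )^{1/q} ] ≤ ‖x‖² · max_{1≤i≤n} ( ∑_{j=1}^n |⟨y_i, y_j⟩| ). -/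
open Finset RCLike

/-- Dragomir's (p,q)-Bombieri inequality. -/
theorem dragomir_pq_bombieri {𝕜 H : Type*} [RCLike 𝕜] [NormedAddCommGroup H]
    [InnerProductSpace 𝕜 H] {n : ℕ} (hn : 0 < n) (x : H) (y : Fin n → H)
    (hx : ∃ i, (inner 𝕜 x (y i) : 𝕜) ≠ 0) {p q : ℝ} (hp : 1 < p) (hq : 1 < q)
    (hpq : 1 / p + 1 / q = 1) :
    (∑ i, ‖(inner 𝕜 x (y i) : 𝕜)‖ ^ 2) ^ 2 /
        ((∑ i, ‖(inner 𝕜 x (y i) : 𝕜)‖ ^ p) ^ (1 / p) *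
          (∑ i, ‖(inner 𝕜 x (y i) : 𝕜)‖ ^ q) ^ (1 / q)) ≤
      ‖x‖ ^ 2 *
        Finset.univ.sup' (Finset.univ_nonempty_iff.mpr (Fin.pos_iff_nonempty.mp hn))
          (fun i => ∑ j, ‖(inner 𝕜 (y i) (y j) : 𝕜)‖) := by
  have hne : (Finset.univ : Finset (Fin n)).Nonempty :=
    Finset.univ_nonempty_iff.mpr (Fin.pos_iff_nonempty.mp hn)
  set c : Fin n → ℝ := fun i => ‖(inner 𝕜 x (y i) : 𝕜)‖ with hc
  set t : Fin n → Fin n → ℝ := fun i j => ‖(inner 𝕜 (y i) (y j) : 𝕜)‖ with ht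
  set M : ℝ := Finset.univ.sup' hne (fun i => ∑ j, t i j) with hM
  have hcpos : ∀ i, 0 ≤ c i := fun i => norm_nonneg _
  have htpos : ∀ i j, 0 ≤ t i j := fun i j => norm_nonneg _
  have hM0 : 0 ≤ M := by
    obtain ⟨i0, -⟩ := hne
    exact le_trans (Finset.sum_nonneg fun j _ => htpos i0 j)
      (Finset.le_sup' (fun i => ∑ j, t i j) (Finset.mem_univ i0))
  have hp0 : p ≠ 0 := by positivity
  have hq0 : q ≠ 0 := by positivity
  have hconj : Real.HolderConjugate p q :=
    ⟨by rw [inv_one, ← one_div, ← one_div]; exact hpq, by positivity, by positivity⟩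
  -- the auxiliary vector
  set a : Fin n → 𝕜 := fun i => starRingEnd 𝕜 (inner 𝕜 x (y i)) with ha
  set z : H := ∑ i, a i • y i with hz
  have hna : ∀ i, ‖a i‖ = c i := fun i => RCLike.norm_conj _
  -- Step 1 : ∑ c i ^ 2 ≤ ‖x‖ * ‖z‖
  have hS : ∑ i, c i ^ 2 ≤ ‖x‖ * ‖z‖ := by
    have h1 : (inner 𝕜 x z : 𝕜) = ∑ i, ((‖(inner 𝕜 x (y i) : 𝕜)‖ : 𝕜)) ^ 2 := by
      rw [hz, inner_sum]
      refine Finset.sum_congr rfl fun i _ => ?_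
      rw [inner_smul_right, ha]
      exact RCLike.conj_mul _
    have h2 : ‖(inner 𝕜 x z : 𝕜)‖ = ∑ i, c i ^ 2 := by
      rw [h1]
      rw [show (∑ i, ((‖(inner 𝕜 x (y i) : 𝕜)‖ : 𝕜)) ^ 2) = ((∑ i, c i ^ 2 : ℝ) : 𝕜) by
        push_cast; rfl]
      rw [RCLike.norm_ofReal, abs_of_nonneg (Finset.sum_nonneg fun i _ => sq_nonneg _)]
    calc ∑ i, c i ^ 2 = ‖(inner 𝕜 x z : 𝕜)‖ := h2.symm
      _ ≤ ‖x‖ * ‖z‖ := norm_inner_le_norm x z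
  -- Step 2 : ‖z‖ ^ 2 ≤ ∑ i, ∑ j, c i * c j * t i j
  have hZ : ‖z‖ ^ 2 ≤ ∑ i, ∑ j, c i * c j * t i j := by
    have h1 : (‖z‖ : ℝ) ^ 2 ≤ ‖(inner 𝕜 z z : 𝕜)‖ := by
      rw [@norm_sq_eq_re_inner 𝕜]
      exact RCLike.re_le_norm _
    refine h1.trans ?_
    have h2 : (inner 𝕜 z z : 𝕜) =
        ∑ i, ∑ j, (starRingEnd 𝕜 (a i)) * a j * inner 𝕜 (y i) (y j) := by
      rw [hz, sum_inner]
      refine Finset.sum_congr rfl fun i _ => ?_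
      rw [inner_sum]
      refine Finset.sum_congr rfl fun j _ => ?_
      rw [inner_smul_left, inner_smul_right]; ring
    rw [h2]
    refine (norm_sum_le _ _).trans ?_
    refine Finset.sum_le_sum fun i _ => (norm_sum_le _ _).trans ?_
    refine Finset.sum_le_sum fun j _ => ?_
    rw [norm_mul, norm_mul, RCLike.norm_conj, hna, hna]
  -- Step 3 : Hölder over pairs
  have hH : ∑ i, ∑ j, c i * c j * t i j ≤
      (∑ i, c i ^ p) ^ (1 / p) * (∑ i, c i ^ q) ^ (1 / q) * M := by
    have key : ∑ i, ∑ j, c i * c j * t i j ≤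
        (∑ ij : Fin n × Fin n, (c ij.1 * t ij.1 ij.2 ^ (1 / p)) ^ p) ^ (1 / p) *
        (∑ ij : Fin n × Fin n, (c ij.2 * t ij.1 ij.2 ^ (1 / q)) ^ q) ^ (1 / q) := by
      have := Real.inner_le_Lp_mul_Lq_of_nonneg (s := (Finset.univ : Finset (Fin n × Fin n)))
        hconj (f := fun ij => c ij.1 * t ij.1 ij.2 ^ (1 / p))
        (g := fun ij => c ij.2 * t ij.1 ij.2 ^ (1 / q))
        (fun ij _ => by positivity) (fun ij _ => by positivity)
      refine le_trans (le_of_eq ?_) this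
      rw [← Finset.sum_product']
      refine Finset.sum_congr rfl fun ij _ => ?_
      have : t ij.1 ij.2 ^ (1 / p) * t ij.1 ij.2 ^ (1 / q) = t ij.1 ij.2 := by
        rw [← Real.rpow_add' (htpos _ _) (by rw [hpq]; norm_num), hpq, Real.rpow_one]
      calc c ij.1 * c ij.2 * t ij.1 ij.2
          = (c ij.1 * t ij.1 ij.2 ^ (1 / p)) * (c ij.2 * t ij.1 ij.2 ^ (1 / q)) := by
            rw [mul_mul_mul_comm, this]
        _ = _ := rfl
    have e1 : ∑ ij : Fin n × Fin n, (c ij.1 * t ij.1 ij.2 ^ (1 / p)) ^ p ≤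
        (∑ i, c i ^ p) * M := by
      have : ∀ ij : Fin n × Fin n, (c ij.1 * t ij.1 ij.2 ^ (1 / p)) ^ p
          = c ij.1 ^ p * t ij.1 ij.2 := by
        intro ij
        rw [Real.mul_rpow (hcpos _) (Real.rpow_nonneg (htpos _ _) _),
          ← Real.rpow_mul (htpos _ _), one_div_mul_cancel hp0, Real.rpow_one]
      simp_rw [this]
      rw [← Finset.univ_product_univ, Finset.sum_product]
      simp_rw [← Finset.mul_sum]
      rw [Finset.sum_mul]
      refine Finset.sum_le_sum fun i _ => ?_
      exact mul_le_mul_of_nonneg_left (Finset.le_sup' (fun i => ∑ j, t i j) (Finset.mem_univ i))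
        (Real.rpow_nonneg (hcpos i) p)
    have e2 : ∑ ij : Fin n × Fin n, (c ij.2 * t ij.1 ij.2 ^ (1 / q)) ^ q ≤
        (∑ i, c i ^ q) * M := by
      have : ∀ ij : Fin n × Fin n, (c ij.2 * t ij.1 ij.2 ^ (1 / q)) ^ q
          = c ij.2 ^ q * t ij.1 ij.2 := by
        intro ij
        rw [Real.mul_rpow (hcpos _) (Real.rpow_nonneg (htpos _ _) _),
          ← Real.rpow_mul (htpos _ _), one_div_mul_cancel hq0, Real.rpow_one]
      simp_rw [this]
      rw [← Finset.univ_product_univ, Finset.sum_product_right]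
      simp_rw [← Finset.mul_sum]
      rw [Finset.sum_mul]
      refine Finset.sum_le_sum fun j _ => ?_
      refine mul_le_mul_of_nonneg_left ?_ (Real.rpow_nonneg (hcpos j) q)
      have hsymm : ∑ i, t i j = ∑ i, t j i := by
        refine Finset.sum_congr rfl fun i _ => ?_
        simp [ht, norm_inner_symm (y i) (y j)]
      rw [hsymm]
      exact Finset.le_sup' (fun i => ∑ j, t i j) (Finset.mem_univ j)
    refine key.trans ?_
    have hAB : ∀ r : ℝ, r ≠ 0 → ((∑ i, c i ^ r) * M) ^ (1/r)
        = (∑ i, c i ^ r) ^ (1/r) * M ^ (1/r) := fun r _ =>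
      Real.mul_rpow (Finset.sum_nonneg fun i _ => Real.rpow_nonneg (hcpos i) r) hM0
    calc (∑ ij : Fin n × Fin n, (c ij.1 * t ij.1 ij.2 ^ (1 / p)) ^ p) ^ (1 / p) *
        (∑ ij : Fin n × Fin n, (c ij.2 * t ij.1 ij.2 ^ (1 / q)) ^ q) ^ (1 / q)
        ≤ ((∑ i, c i ^ p) * M) ^ (1/p) * ((∑ i, c i ^ q) * M) ^ (1/q) := by
          have hsnn : ∀ (r : ℝ) (f : Fin n × Fin n → ℝ), (∀ ij, 0 ≤ f ij) →
              (0:ℝ) ≤ ∑ ij : Fin n × Fin n, f ij ^ r := fun r f hf =>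
            Finset.sum_nonneg fun ij _ => Real.rpow_nonneg (hf ij) r
          have h1nn : (0:ℝ) ≤ ∑ ij : Fin n × Fin n, (c ij.1 * t ij.1 ij.2 ^ (1 / p)) ^ p :=
            hsnn p _ fun ij => mul_nonneg (hcpos _) (Real.rpow_nonneg (htpos _ _) _)
          have h2nn : (0:ℝ) ≤ ∑ ij : Fin n × Fin n, (c ij.2 * t ij.1 ij.2 ^ (1 / q)) ^ q :=
            hsnn q _ fun ij => mul_nonneg (hcpos _) (Real.rpow_nonneg (htpos _ _) _)
          exact mul_le_mul (Real.rpow_le_rpow h1nn e1 (by positivity))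
            (Real.rpow_le_rpow h2nn e2 (by positivity))
            (Real.rpow_nonneg h2nn _)
            (Real.rpow_nonneg (mul_nonneg (Finset.sum_nonneg fun i _ =>
              Real.rpow_nonneg (hcpos i) p) hM0) _)
      _ = (∑ i, c i ^ p) ^ (1/p) * (∑ i, c i ^ q) ^ (1/q) * (M ^ (1/p) * M ^ (1/q)) := by
          rw [hAB p hp0, hAB q hq0]; ring
      _ = (∑ i, c i ^ p) ^ (1 / p) * (∑ i, c i ^ q) ^ (1 / q) * M := by
          rw [← Real.rpow_add' hM0 (by rw [hpq]; norm_num), hpq, Real.rpow_one]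
  -- combine
  obtain ⟨i0, hi0⟩ := hx
  have hc0 : 0 < c i0 := by simpa [hc] using norm_pos_iff.mpr hi0
  have hA : 0 < (∑ i, c i ^ p) ^ (1 / p) := by
    apply Real.rpow_pos_of_pos
    refine Finset.sum_pos' (fun i _ => Real.rpow_nonneg (hcpos i) p) ⟨i0, Finset.mem_univ i0, ?_⟩
    exact Real.rpow_pos_of_pos hc0 p
  have hB : 0 < (∑ i, c i ^ q) ^ (1 / q) := by
    apply Real.rpow_pos_of_pos
    refine Finset.sum_pos' (fun i _ => Real.rpow_nonneg (hcpos i) q) ⟨i0, Finset.mem_univ i0, ?_⟩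
    exact Real.rpow_pos_of_pos hc0 q
  rw [div_le_iff₀ (by positivity)]
  have hfinal : (∑ i, c i ^ 2) ^ 2 ≤
      ‖x‖ ^ 2 * M * ((∑ i, c i ^ p) ^ (1/p) * (∑ i, c i ^ q) ^ (1/q)) := by
    have h1 : (∑ i, c i ^ 2) ^ 2 ≤ (‖x‖ * ‖z‖) ^ 2 :=
      pow_le_pow_left₀ (Finset.sum_nonneg fun i _ => sq_nonneg _) hS 2
    have h2 : (‖x‖ * ‖z‖) ^ 2 = ‖x‖ ^ 2 * ‖z‖ ^ 2 := by ring
    have h3 : ‖x‖ ^ 2 * ‖z‖ ^ 2 ≤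
        ‖x‖ ^ 2 * ((∑ i, c i ^ p) ^ (1/p) * (∑ i, c i ^ q) ^ (1/q) * M) :=
      mul_le_mul_of_nonneg_left (hZ.trans hH) (sq_nonneg _)
    calc (∑ i, c i ^ 2) ^ 2 ≤ ‖x‖ ^ 2 * ‖z‖ ^ 2 := h1.trans_eq h2
      _ ≤ ‖x‖ ^ 2 * ((∑ i, c i ^ p) ^ (1/p) * (∑ i, c i ^ q) ^ (1/q) * M) := h3
      _ = ‖x‖ ^ 2 * M * ((∑ i, c i ^ p) ^ (1/p) * (∑ i, c i ^ q) ^ (1/q)) := by ring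
  exact hfinal
end

section
/- Heilbronn's inequality: For any vectors x, y_1, ..., y_n in an inner product space (H, ⟨·,·⟩) over the real or complex field, one has ∑_{i=1}^n |⟨x, y_i⟩| ≤ ‖x‖ · ( ∑_{i,j=1}^n |⟨y_i, y_j⟩| )^{1/2}. -/
/-- Heilbronn's inequality. -/
theorem heilbronn_inequality {𝕜 H : Type*} [RCLike 𝕜] [NormedAddCommGroup H]
    [InnerProductSpace 𝕜 H] {n : ℕ} (hn : 0 < n) (x : H) (y : Fin n → H) :
    ∑ i, ‖(inner 𝕜 x (y i) : 𝕜)‖ ≤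
      ‖x‖ * Real.sqrt (∑ i, ∑ j, ‖(inner 𝕜 (y i) (y j) : 𝕜)‖) := by
  set c : Fin n → 𝕜 := fun i =>
    if h : (inner 𝕜 x (y i) : 𝕜) = 0 then 1 else (‖(inner 𝕜 x (y i) : 𝕜)‖ : 𝕜) / inner 𝕜 x (y i)
  have hc_norm : ∀ i, ‖c i‖ = 1 := by
    intro i
    simp only [c]
    split_ifs with h
    · simp
    · rw [norm_div, RCLike.norm_ofReal, abs_norm,
        div_self (norm_ne_zero_iff.mpr h)]
  have hc_mul : ∀ i, c i * (inner 𝕜 x (y i) : 𝕜) = (‖(inner 𝕜 x (y i) : 𝕜)‖ : 𝕜) := by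
    intro i
    simp only [c]
    split_ifs with h
    · simp [h]
    · field_simp
  set z : H := ∑ i, c i • y i with hz
  have hxz : (inner 𝕜 x z : 𝕜) = (∑ i, ‖(inner 𝕜 x (y i) : 𝕜)‖ : ℝ) := by
    rw [hz, inner_sum]
    push_cast
    exact Finset.sum_congr rfl fun i _ => by rw [inner_smul_right, hc_mul]
  have h1 : ∑ i, ‖(inner 𝕜 x (y i) : 𝕜)‖ ≤ ‖x‖ * ‖z‖ := by
    calc ∑ i, ‖(inner 𝕜 x (y i) : 𝕜)‖ = ‖(inner 𝕜 x z : 𝕜)‖ := by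
          rw [hxz, RCLike.norm_ofReal, abs_of_nonneg
            (Finset.sum_nonneg fun i _ => norm_nonneg _)]
      _ ≤ ‖x‖ * ‖z‖ := norm_inner_le_norm x z
  have h2 : ‖z‖ ≤ Real.sqrt (∑ i, ∑ j, ‖(inner 𝕜 (y i) (y j) : 𝕜)‖) := by
    rw [Real.le_sqrt (norm_nonneg _)] <;>
      try positivity
    have : (‖z‖ : ℝ) ^ 2 = ‖(inner 𝕜 z z : 𝕜)‖ := by
      rw [@inner_self_eq_norm_sq_to_K 𝕜]
      simp
    rw [this, hz, inner_sum]
    calc ‖∑ j, (inner 𝕜 (∑ i, c i • y i) (c j • y j) : 𝕜)‖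
        ≤ ∑ j, ‖(inner 𝕜 (∑ i, c i • y i) (c j • y j) : 𝕜)‖ := norm_sum_le _ _
      _ ≤ ∑ j, ∑ i, ‖(inner 𝕜 (y i) (y j) : 𝕜)‖ := by
          apply Finset.sum_le_sum
          intro j _
          rw [sum_inner]
          refine (norm_sum_le _ _).trans (Finset.sum_le_sum fun i _ => ?_)
          rw [inner_smul_left, inner_smul_right, norm_mul, norm_mul,
            RCLike.norm_conj, hc_norm, hc_norm, one_mul, one_mul]
      _ = ∑ i, ∑ j, ‖(inner 𝕜 (y i) (y j) : 𝕜)‖ := Finset.sum_comm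
  calc ∑ i, ‖(inner 𝕜 x (y i) : 𝕜)‖ ≤ ‖x‖ * ‖z‖ := h1
    _ ≤ ‖x‖ * Real.sqrt (∑ i, ∑ j, ‖(inner 𝕜 (y i) (y j) : 𝕜)‖) :=
        mul_le_mul_of_nonneg_left h2 (norm_nonneg _)
end

section
/- Pečarić's inequality: Let x, y_1, ..., y_n be vectors in an inner product space (H, ⟨·,·⟩) over the real or complex field 𝕂 and let c_1, ..., c_n ∈ 𝕂. Then | ∑_{k=1}^n c_k ⟨x, y_k⟩ |² ≤ ‖x‖² · ∑_{i=1}^n |c_i|² ( ∑_{j=1}^n |⟨y_i, y_j⟩| ) ≤ ‖x‖² · ( ∑_{k=1}^n |c_k|² ) · max_{1≤i≤n} { ∑_{j=1}^n |⟨y_i, y_j⟩| }. -/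
lemma key_sum {n : ℕ} (a : Fin n → ℝ) (t : Fin n → Fin n → ℝ)
    (hsym : ∀ i j, t i j = t j i) (hpos : ∀ i j, 0 ≤ t i j) :
    ∑ i, ∑ j, a i * a j * t i j ≤ ∑ i, a i ^ 2 * ∑ j, t i j := by
  have h1 : ∑ i, ∑ j, a i * a j * t i j ≤
      ∑ i, ∑ j, (a i ^ 2 + a j ^ 2) / 2 * t i j := by
    refine Finset.sum_le_sum fun i _ => Finset.sum_le_sum fun j _ => ?_
    apply mul_le_mul_of_nonneg_right _ (hpos i j)
    nlinarith [sq_nonneg (a i - a j)]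
  have h2 : ∑ i, ∑ j, (a i ^ 2 + a j ^ 2) / 2 * t i j
      = ∑ i, a i ^ 2 * ∑ j, t i j := by
    have hswap : ∑ i, ∑ j, a j ^ 2 * t i j = ∑ i, ∑ j, a i ^ 2 * t i j := by
      rw [Finset.sum_comm]
      exact Finset.sum_congr rfl fun i _ => Finset.sum_congr rfl fun j _ => by rw [hsym]
    calc ∑ i, ∑ j, (a i ^ 2 + a j ^ 2) / 2 * t i j
        = ∑ i, ∑ j, ((a i ^ 2 * t i j) / 2 + (a j ^ 2 * t i j) / 2) :=
          Finset.sum_congr rfl fun i _ => Finset.sum_congr rfl fun j _ => by ring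
      _ = (∑ i, ∑ j, a i ^ 2 * t i j) / 2 + (∑ i, ∑ j, a j ^ 2 * t i j) / 2 := by
          simp [Finset.sum_add_distrib, Finset.sum_div]
      _ = ∑ i, ∑ j, a i ^ 2 * t i j := by rw [hswap]; ring
      _ = ∑ i, a i ^ 2 * ∑ j, t i j :=
          Finset.sum_congr rfl fun i _ => (Finset.mul_sum _ _ _).symm
  linarith

/-- Pečarić's inequality. -/
theorem pecaric_inequality {𝕜 H : Type*} [RCLike 𝕜] [NormedAddCommGroup H]
    [InnerProductSpace 𝕜 H] {n : ℕ} (hn : 0 < n) (x : H) (y : Fin n → H) (c : Fin n → 𝕜) :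
    ‖∑ k, c k * (inner 𝕜 x (y k) : 𝕜)‖ ^ 2 ≤
        ‖x‖ ^ 2 * ∑ i, (‖c i‖ ^ 2 * ∑ j, ‖(inner 𝕜 (y i) (y j) : 𝕜)‖) ∧
      ‖x‖ ^ 2 * ∑ i, (‖c i‖ ^ 2 * ∑ j, ‖(inner 𝕜 (y i) (y j) : 𝕜)‖) ≤
        ‖x‖ ^ 2 * (∑ k, ‖c k‖ ^ 2) *
          Finset.univ.sup' (Finset.univ_nonempty_iff.mpr (Fin.pos_iff_nonempty.mp hn))
            (fun i => ∑ j, ‖(inner 𝕜 (y i) (y j) : 𝕜)‖) := by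
  constructor
  · set u : H := ∑ k, c k • y k with hu
    have hx : ∑ k, c k * (inner 𝕜 x (y k) : 𝕜) = inner 𝕜 x u := by
      rw [hu, inner_sum]
      exact Finset.sum_congr rfl fun k _ => by rw [inner_smul_right]
    have hu2 : ‖u‖ ^ 2 ≤ ∑ i, (‖c i‖ ^ 2 * ∑ j, ‖(inner 𝕜 (y i) (y j) : 𝕜)‖) := by
      have h0 : (‖u‖ : ℝ) ^ 2 = RCLike.re (inner 𝕜 u u : 𝕜) := by
        rw [@inner_self_eq_norm_sq 𝕜]
      have h1 : (inner 𝕜 u u : 𝕜) =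
          ∑ i, ∑ j, (starRingEnd 𝕜) (c i) * (c j * inner 𝕜 (y i) (y j)) := by
        rw [hu, sum_inner]
        exact Finset.sum_congr rfl fun i _ => by
          rw [inner_smul_left, inner_sum]
          rw [Finset.mul_sum]
          exact Finset.sum_congr rfl fun j _ => by rw [inner_smul_right]
      have h2 : RCLike.re (inner 𝕜 u u : 𝕜) ≤
          ∑ i, ∑ j, ‖c i‖ * ‖c j‖ * ‖(inner 𝕜 (y i) (y j) : 𝕜)‖ := by
        rw [h1]
        calc RCLike.re (∑ i, ∑ j, (starRingEnd 𝕜) (c i) * (c j * inner 𝕜 (y i) (y j)))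
            ≤ ‖∑ i, ∑ j, (starRingEnd 𝕜) (c i) * (c j * (inner 𝕜 (y i) (y j) : 𝕜))‖ :=
              RCLike.re_le_norm _
          _ ≤ ∑ i, ‖∑ j, (starRingEnd 𝕜) (c i) * (c j * (inner 𝕜 (y i) (y j) : 𝕜))‖ :=
              norm_sum_le _ _
          _ ≤ ∑ i, ∑ j, ‖c i‖ * ‖c j‖ * ‖(inner 𝕜 (y i) (y j) : 𝕜)‖ := by
              refine Finset.sum_le_sum fun i _ => ?_
              refine (norm_sum_le _ _).trans_eq ?_
              exact Finset.sum_congr rfl fun j _ => by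
                simp [norm_mul, mul_assoc]
      have h3 := key_sum (fun i => ‖c i‖) (fun i j => ‖(inner 𝕜 (y i) (y j) : 𝕜)‖)
        (fun i j => norm_inner_symm (y i) (y j)) (fun i j => norm_nonneg _)
      rw [h0]
      exact h2.trans h3
    calc ‖∑ k, c k * (inner 𝕜 x (y k) : 𝕜)‖ ^ 2 = ‖(inner 𝕜 x u : 𝕜)‖ ^ 2 := by rw [hx]
      _ ≤ (‖x‖ * ‖u‖) ^ 2 := by
          apply pow_le_pow_left₀ (norm_nonneg _) (norm_inner_le_norm x u)
      _ = ‖x‖ ^ 2 * ‖u‖ ^ 2 := by ring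
      _ ≤ ‖x‖ ^ 2 * ∑ i, (‖c i‖ ^ 2 * ∑ j, ‖(inner 𝕜 (y i) (y j) : 𝕜)‖) := by
          exact mul_le_mul_of_nonneg_left hu2 (by positivity)
  · rw [mul_assoc]
    apply mul_le_mul_of_nonneg_left _ (by positivity)
    rw [Finset.sum_mul]
    refine Finset.sum_le_sum fun i _ => ?_
    apply mul_le_mul_of_nonneg_left _ (by positivity)
    exact Finset.le_sup' (fun i => ∑ j, ‖(inner 𝕜 (y i) (y j) : 𝕜)‖) (Finset.mem_univ i)
end

section
/- Dragomir's first Pečarić-type bound: Let x, y_1, ..., y_n be vectors in an inner product space (H, ⟨·,·⟩) over the real or complex field 𝕂 and let c_1, ..., c_n ∈ 𝕂. Then | ∑_{k=1}^n c_k ⟨x, y_k⟩ |² ≤ ‖x‖² · ( max_{1≤k≤n} |c_k| ) · ( ∑_{k=1}^n |c_k| ) · max_{1≤i≤n} ( ∑_{j=1}^n |⟨y_i, y_j⟩| ). -/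
/-- Dragomir's first Pečarić-type bound. -/
theorem dragomir_pecaric_type_first {𝕜 H : Type*} [RCLike 𝕜] [NormedAddCommGroup H]
    [InnerProductSpace 𝕜 H] {n : ℕ} (hn : 0 < n) (x : H) (y : Fin n → H) (c : Fin n → 𝕜) :
    ‖∑ k, c k * (inner 𝕜 x (y k) : 𝕜)‖ ^ 2 ≤
      ‖x‖ ^ 2 *
        (Finset.univ.sup' (Finset.univ_nonempty_iff.mpr (Fin.pos_iff_nonempty.mp hn))
          (fun k => ‖c k‖)) *
        (∑ k, ‖c k‖) *
        Finset.univ.sup' (Finset.univ_nonempty_iff.mpr (Fin.pos_iff_nonempty.mp hn))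
          (fun i => ∑ j, ‖(inner 𝕜 (y i) (y j) : 𝕜)‖) := by
  classical
  have hne : (Finset.univ : Finset (Fin n)).Nonempty :=
    Finset.univ_nonempty_iff.mpr (Fin.pos_iff_nonempty.mp hn)
  set M : ℝ := Finset.univ.sup' hne (fun k => ‖c k‖) with hM
  set T : ℝ := Finset.univ.sup' hne (fun i => ∑ j, ‖(inner 𝕜 (y i) (y j) : 𝕜)‖) with hT
  set v : H := ∑ k, c k • y k with hv
  have h1 : (∑ k, c k * (inner 𝕜 x (y k) : 𝕜)) = inner 𝕜 x v := by
    rw [hv, inner_sum]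
    simp [inner_smul_right]
  have hCS : ‖(inner 𝕜 x v : 𝕜)‖ ≤ ‖x‖ * ‖v‖ := norm_inner_le_norm x v
  have hvsq : ‖v‖ ^ 2 ≤ ∑ i, ∑ j, ‖c i‖ * ‖c j‖ * ‖(inner 𝕜 (y i) (y j) : 𝕜)‖ := by
    have h2 : ‖v‖ ^ 2 = RCLike.re (inner 𝕜 v v : 𝕜) := (inner_self_eq_norm_sq v).symm
    have h3 : (inner 𝕜 v v : 𝕜) =
        ∑ i, ∑ j, (starRingEnd 𝕜) (c i) * c j * (inner 𝕜 (y i) (y j) : 𝕜) := by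
      rw [hv, sum_inner]
      refine Finset.sum_congr rfl fun i _ => ?_
      rw [inner_smul_left, inner_sum]
      rw [Finset.mul_sum]
      refine Finset.sum_congr rfl fun j _ => ?_
      rw [inner_smul_right]; ring
    have h4 : RCLike.re (inner 𝕜 v v : 𝕜) ≤ ‖(inner 𝕜 v v : 𝕜)‖ := RCLike.re_le_norm _
    calc ‖v‖ ^ 2 ≤ ‖(inner 𝕜 v v : 𝕜)‖ := h2 ▸ h4
      _ ≤ ∑ i, ∑ j, ‖c i‖ * ‖c j‖ * ‖(inner 𝕜 (y i) (y j) : 𝕜)‖ := by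
          rw [h3]
          refine (norm_sum_le _ _).trans (Finset.sum_le_sum fun i _ => ?_)
          refine (norm_sum_le _ _).trans (Finset.sum_le_sum fun j _ => ?_)
          simp [norm_mul]
  have hbound : (∑ i, ∑ j, ‖c i‖ * ‖c j‖ * ‖(inner 𝕜 (y i) (y j) : 𝕜)‖) ≤
      M * (∑ k, ‖c k‖) * T := by
    have : ∀ i, (∑ j, ‖c i‖ * ‖c j‖ * ‖(inner 𝕜 (y i) (y j) : 𝕜)‖) ≤ ‖c i‖ * (M * T) := by
      intro i
      have hstep : (∑ j, ‖c i‖ * ‖c j‖ * ‖(inner 𝕜 (y i) (y j) : 𝕜)‖) ≤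
          ∑ j, ‖c i‖ * M * ‖(inner 𝕜 (y i) (y j) : 𝕜)‖ := by
        refine Finset.sum_le_sum fun j _ => ?_
        have hMj : ‖c j‖ ≤ M := Finset.le_sup' (fun k => ‖c k‖) (Finset.mem_univ j)
        have := mul_le_mul_of_nonneg_left hMj (norm_nonneg (c i))
        exact mul_le_mul_of_nonneg_right this (norm_nonneg _)
      refine hstep.trans ?_
      rw [← Finset.mul_sum]
      have hTi : (∑ j, ‖(inner 𝕜 (y i) (y j) : 𝕜)‖) ≤ T :=
        Finset.le_sup' (fun i => ∑ j, ‖(inner 𝕜 (y i) (y j) : 𝕜)‖) (Finset.mem_univ i)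
      have hMnn : 0 ≤ M := le_trans (norm_nonneg (c i)) (Finset.le_sup' (fun k => ‖c k‖) (Finset.mem_univ i))
      calc ‖c i‖ * M * (∑ j, ‖(inner 𝕜 (y i) (y j) : 𝕜)‖) ≤ ‖c i‖ * M * T :=
            mul_le_mul_of_nonneg_left hTi (mul_nonneg (norm_nonneg _) hMnn)
        _ = ‖c i‖ * (M * T) := by ring
    calc (∑ i, ∑ j, ‖c i‖ * ‖c j‖ * ‖(inner 𝕜 (y i) (y j) : 𝕜)‖) ≤
          ∑ i, ‖c i‖ * (M * T) := Finset.sum_le_sum fun i _ => this i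
      _ = M * (∑ k, ‖c k‖) * T := by rw [← Finset.sum_mul]; ring
  calc ‖∑ k, c k * (inner 𝕜 x (y k) : 𝕜)‖ ^ 2 = ‖(inner 𝕜 x v : 𝕜)‖ ^ 2 := by rw [h1]
    _ ≤ (‖x‖ * ‖v‖) ^ 2 := by
        exact pow_le_pow_left₀ (norm_nonneg _) hCS 2
    _ = ‖x‖ ^ 2 * ‖v‖ ^ 2 := by ring
    _ ≤ ‖x‖ ^ 2 * (M * (∑ k, ‖c k‖) * T) := by
        exact mul_le_mul_of_nonneg_left (hvsq.trans hbound) (sq_nonneg _)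
    _ = ‖x‖ ^ 2 * M * (∑ k, ‖c k‖) * T := by ring
end

section
/- Dragomir's second Pečarić-type bound: Let x, y_1, ..., y_n be vectors in an inner product space (H, ⟨·,·⟩) over the real or complex field 𝕂, let c_1, ..., c_n ∈ 𝕂, and let p > 1, q > 1 with 1/p + 1/q = 1. Then | ∑_{k=1}^n c_k ⟨x, y_k⟩ |² ≤ ‖x‖² · ( ∑_{k=1}^n |c_k| ) · ( ∑_{k=1}^n |c_k|^p )^{1/p} · max_{1≤i≤n} { ( ∑_{j=1}^n |⟨y_i, y_j⟩|^q )^{1/q} }. -/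
/-- Dragomir's second Pečarić-type bound. -/
theorem dragomir_pecaric_type_second {𝕜 H : Type*} [RCLike 𝕜] [NormedAddCommGroup H]
    [InnerProductSpace 𝕜 H] {n : ℕ} (hn : 0 < n) (x : H) (y : Fin n → H) (c : Fin n → 𝕜)
    {p q : ℝ} (hp : 1 < p) (hq : 1 < q) (hpq : 1 / p + 1 / q = 1) :
    ‖∑ k, c k * (inner 𝕜 x (y k) : 𝕜)‖ ^ 2 ≤
      ‖x‖ ^ 2 * (∑ k, ‖c k‖) * (∑ k, ‖c k‖ ^ p) ^ (1 / p) *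
        Finset.univ.sup' (Finset.univ_nonempty_iff.mpr (Fin.pos_iff_nonempty.mp hn))
          (fun i => (∑ j, ‖(inner 𝕜 (y i) (y j) : 𝕜)‖ ^ q) ^ (1 / q)) := by
  have hne : (Finset.univ : Finset (Fin n)).Nonempty :=
    Finset.univ_nonempty_iff.mpr (Fin.pos_iff_nonempty.mp hn)
  have hpq' : p.HolderConjugate q := Real.holderConjugate_iff.mpr ⟨hp, by rw [← one_div, ← one_div]; exact hpq⟩
  set M := Finset.univ.sup' hne
      (fun i => (∑ j, ‖(inner 𝕜 (y i) (y j) : 𝕜)‖ ^ q) ^ (1 / q)) with hM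
  set z := ∑ k, c k • y k with hz
  set P : ℝ := (∑ k, ‖c k‖ ^ p) ^ (1 / p) with hP
  have hPnn : 0 ≤ P := Real.rpow_nonneg
    (Finset.sum_nonneg fun j _ => Real.rpow_nonneg (norm_nonneg _) _) _
  -- Step 1
  have h1 : (∑ k, c k * (inner 𝕜 x (y k) : 𝕜)) = inner 𝕜 x z := by
    rw [hz, inner_sum]
    exact Finset.sum_congr rfl fun k _ => by rw [inner_smul_right]
  have hcs : ‖∑ k, c k * (inner 𝕜 x (y k) : 𝕜)‖ ^ 2 ≤ ‖x‖ ^ 2 * ‖z‖ ^ 2 := by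
    rw [h1, ← mul_pow]
    exact pow_le_pow_left₀ (norm_nonneg _) (norm_inner_le_norm x z) 2
  -- Step 2 : ‖z‖^2 ≤ ∑_i ‖c i‖ * ∑_j ‖c j‖ * ‖⟨y i, y j⟩‖
  have h2 : ‖z‖ ^ 2 ≤ ∑ i, ‖c i‖ * ∑ j, ‖c j‖ * ‖(inner 𝕜 (y i) (y j) : 𝕜)‖ := by
    have : ((‖z‖ : ℝ) ^ 2 : ℝ) = ‖(inner 𝕜 z z : 𝕜)‖ := by
      rw [@inner_self_eq_norm_sq_to_K 𝕜]
      rw [norm_pow, RCLike.norm_ofReal, abs_norm]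
    rw [this, hz]
    calc ‖(inner 𝕜 (∑ i, c i • y i) (∑ j, c j • y j) : 𝕜)‖
        = ‖∑ i, ∑ j, (starRingEnd 𝕜) (c i) * c j * (inner 𝕜 (y i) (y j) : 𝕜)‖ := by
          rw [sum_inner]
          congr 1
          refine Finset.sum_congr rfl fun i _ => ?_
          rw [inner_smul_left, inner_sum, Finset.mul_sum]
          exact Finset.sum_congr rfl fun j _ => by rw [inner_smul_right]; ring
      _ ≤ ∑ i, ∑ j, ‖(starRingEnd 𝕜) (c i) * c j * (inner 𝕜 (y i) (y j) : 𝕜)‖ :=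
          norm_sum_le_of_le _ fun i _ => norm_sum_le _ _
      _ = ∑ i, ‖c i‖ * ∑ j, ‖c j‖ * ‖(inner 𝕜 (y i) (y j) : 𝕜)‖ := by
          refine Finset.sum_congr rfl fun i _ => ?_
          rw [Finset.mul_sum]
          refine Finset.sum_congr rfl fun j _ => ?_
          rw [norm_mul, norm_mul, RCLike.norm_conj]; ring
  -- Step 3 : Hölder on each inner sum
  have h3 : ∀ i, (∑ j, ‖c j‖ * ‖(inner 𝕜 (y i) (y j) : 𝕜)‖) ≤ P * M := by
    intro i
    have hH := Real.inner_le_Lp_mul_Lq_of_nonneg (f := fun j => ‖c j‖)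
      (g := fun j => ‖(inner 𝕜 (y i) (y j) : 𝕜)‖) (s := Finset.univ) hpq'
      (fun j _ => norm_nonneg _) (fun j _ => norm_nonneg _)
    refine hH.trans (mul_le_mul_of_nonneg_left ?_ hPnn)
    exact Finset.le_sup' (fun i => (∑ j, ‖(inner 𝕜 (y i) (y j) : 𝕜)‖ ^ q) ^ (1 / q))
      (Finset.mem_univ i)
  have h4 : ‖z‖ ^ 2 ≤ (∑ i, ‖c i‖) * (P * M) := by
    refine h2.trans ?_
    rw [Finset.sum_mul]
    exact Finset.sum_le_sum fun i _ =>
      mul_le_mul_of_nonneg_left (h3 i) (norm_nonneg _)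
  calc ‖∑ k, c k * (inner 𝕜 x (y k) : 𝕜)‖ ^ 2 ≤ ‖x‖ ^ 2 * ‖z‖ ^ 2 := hcs
    _ ≤ ‖x‖ ^ 2 * ((∑ i, ‖c i‖) * (P * M)) :=
        mul_le_mul_of_nonneg_left h4 (by positivity)
    _ = ‖x‖ ^ 2 * (∑ k, ‖c k‖) * P * M := by ring
end

section
/- Dragomir's third Pečarić-type bound: Let x, y_1, ..., y_n be vectors in an inner product space (H, ⟨·,·⟩) over the real or complex field 𝕂 and let c_1, ..., c_n ∈ 𝕂. Then | ∑_{k=1}^n c_k ⟨x, y_k⟩ |² ≤ ‖x‖² · ( ∑_{k=1}^n |c_k| )² · max_{1≤i,j≤n} |⟨y_i, y_j⟩|. -/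
theorem dragomir_aux_s9 {𝕜 H : Type*} [RCLike 𝕜] [NormedAddCommGroup H]
    [InnerProductSpace 𝕜 H] {n : ℕ} (x : H) (y : Fin n → H) (c : Fin n → 𝕜)
    (hne : (Finset.univ : Finset (Fin n × Fin n)).Nonempty) :
    ‖∑ k, c k * (inner 𝕜 x (y k) : 𝕜)‖ ^ 2 ≤
      ‖x‖ ^ 2 * (∑ k, ‖c k‖) ^ 2 *
        Finset.univ.sup' hne
          (fun ij : Fin n × Fin n => ‖(inner 𝕜 (y ij.1) (y ij.2) : 𝕜)‖) := by
  set M := Finset.univ.sup' hne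
      (fun ij : Fin n × Fin n => ‖(inner 𝕜 (y ij.1) (y ij.2) : 𝕜)‖) with hMdef
  have hMle : ∀ i j : Fin n, ‖(inner 𝕜 (y i) (y j) : 𝕜)‖ ≤ M := fun i j =>
    Finset.le_sup' (fun ij : Fin n × Fin n => ‖(inner 𝕜 (y ij.1) (y ij.2) : 𝕜)‖) (Finset.mem_univ (i, j))
  obtain ⟨⟨i0, j0⟩, -⟩ := id hne
  have hM0 : 0 ≤ M := le_trans (norm_nonneg _) (hMle i0 j0)
  set s := ∑ k, c k • y k with hs
  have h1 : ∑ k, c k * (inner 𝕜 x (y k) : 𝕜) = inner 𝕜 x s := by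
    rw [hs, inner_sum]
    simp [inner_smul_right]
  have h2 : ‖(inner 𝕜 x s : 𝕜)‖ ^ 2 ≤ ‖x‖ ^ 2 * ‖s‖ ^ 2 := by
    rw [← mul_pow]
    exact pow_le_pow_left₀ (norm_nonneg _) (norm_inner_le_norm x s) 2
  have h3 : ‖s‖ ^ 2 ≤ (∑ k, ‖c k‖) ^ 2 * M := by
    have e1 : (‖s‖ : ℝ) ^ 2 = ‖(inner 𝕜 s s : 𝕜)‖ := by
      rw [@inner_self_eq_norm_sq_to_K 𝕜]
      simp [pow_two]
    have e2 : (inner 𝕜 s s : 𝕜)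
        = ∑ i, ∑ j, (starRingEnd 𝕜) (c i) * c j * inner 𝕜 (y i) (y j) := by
      rw [hs, sum_inner]
      congr 1
      ext i
      rw [inner_sum]
      congr 1
      ext j
      rw [inner_smul_left, inner_smul_right]
      ring
    calc ‖s‖ ^ 2 = ‖(inner 𝕜 s s : 𝕜)‖ := e1
      _ ≤ ∑ i, ∑ j, ‖(starRingEnd 𝕜) (c i) * c j * (inner 𝕜 (y i) (y j) : 𝕜)‖ := by
          rw [e2]
          exact (norm_sum_le _ _).trans (Finset.sum_le_sum fun i _ => norm_sum_le _ _)
      _ ≤ ∑ i, ∑ j, ‖c i‖ * ‖c j‖ * M := by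
          refine Finset.sum_le_sum fun i _ => Finset.sum_le_sum fun j _ => ?_
          rw [norm_mul, norm_mul, RCLike.norm_conj]
          exact mul_le_mul_of_nonneg_left (hMle i j)
            (mul_nonneg (norm_nonneg _) (norm_nonneg _))
      _ = (∑ k, ‖c k‖) ^ 2 * M := by
          rw [pow_two, Finset.sum_mul_sum, Finset.sum_mul]
          congr 1; ext i
          rw [Finset.sum_mul]
  calc ‖∑ k, c k * (inner 𝕜 x (y k) : 𝕜)‖ ^ 2 = ‖(inner 𝕜 x s : 𝕜)‖ ^ 2 := by rw [h1]
    _ ≤ ‖x‖ ^ 2 * ‖s‖ ^ 2 := h2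
    _ ≤ ‖x‖ ^ 2 * ((∑ k, ‖c k‖) ^ 2 * M) :=
        mul_le_mul_of_nonneg_left h3 (by positivity)
    _ = ‖x‖ ^ 2 * (∑ k, ‖c k‖) ^ 2 * M := by ring

/-- Dragomir's third Pečarić-type bound. -/
theorem dragomir_pecaric_type_third {𝕜 H : Type*} [RCLike 𝕜] [NormedAddCommGroup H]
    [InnerProductSpace 𝕜 H] {n : ℕ} (hn : 0 < n) (x : H) (y : Fin n → H) (c : Fin n → 𝕜) :
    ‖∑ k, c k * (inner 𝕜 x (y k) : 𝕜)‖ ^ 2 ≤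
      ‖x‖ ^ 2 * (∑ k, ‖c k‖) ^ 2 *
        Finset.univ.sup'
          (Finset.univ_nonempty_iff.mpr
            (by have := Fin.pos_iff_nonempty.mp hn; exact instNonemptyProd))
          (fun ij : Fin n × Fin n => ‖(inner 𝕜 (y ij.1) (y ij.2) : 𝕜)‖) := by
  exact dragomir_aux_s9 x y c _
end

section
/- If x, y_1, ..., y_n are vectors in an inner product space (H, ⟨·,·⟩) over the real or complex field with not all ⟨x, y_k⟩ = 0, then ( ∑_{k=1}^n |⟨x, y_k⟩|² )² / [ ( max_{1≤k≤n} |⟨x, y_k⟩| ) · ∑_{k=1}^n |⟨x, y_k⟩| ] ≤ ‖x‖² · max_{1≤i≤n} { ∑_{j=1}^n |⟨y_i, y_j⟩| }. -/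
theorem dragomir_bessel_max_bound {𝕜 H : Type*} [RCLike 𝕜] [NormedAddCommGroup H]
    [InnerProductSpace 𝕜 H] {n : ℕ} (hn : 0 < n) (x : H) (y : Fin n → H)
    (hx : ∃ k, (inner 𝕜 x (y k) : 𝕜) ≠ 0) :
    (∑ k, ‖(inner 𝕜 x (y k) : 𝕜)‖ ^ 2) ^ 2 /
        ((Finset.univ.sup' (Finset.univ_nonempty_iff.mpr (Fin.pos_iff_nonempty.mp hn))
            fun k => ‖(inner 𝕜 x (y k) : 𝕜)‖) *
          ∑ k, ‖(inner 𝕜 x (y k) : 𝕜)‖) ≤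
      ‖x‖ ^ 2 *
        Finset.univ.sup' (Finset.univ_nonempty_iff.mpr (Fin.pos_iff_nonempty.mp hn))
          (fun i => ∑ j, ‖(inner 𝕜 (y i) (y j) : 𝕜)‖) := by
  have hne := Finset.univ_nonempty_iff.mpr (Fin.pos_iff_nonempty.mp hn)
  set M : ℝ := Finset.univ.sup' (Finset.univ_nonempty_iff.mpr (Fin.pos_iff_nonempty.mp hn))
      fun k => ‖(inner 𝕜 x (y k) : 𝕜)‖ with hM
  set S : ℝ := ∑ k, ‖(inner 𝕜 x (y k) : 𝕜)‖ with hS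
  set B : ℝ := Finset.univ.sup' (Finset.univ_nonempty_iff.mpr (Fin.pos_iff_nonempty.mp hn))
      (fun i => ∑ j, ‖(inner 𝕜 (y i) (y j) : 𝕜)‖) with hB
  set T : ℝ := ∑ k, ‖(inner 𝕜 x (y k) : 𝕜)‖ ^ 2 with hT
  obtain ⟨k0, hk0⟩ := hx
  have hMpos : 0 < M := by
    have := Finset.le_sup' (fun k => ‖(inner 𝕜 x (y k) : 𝕜)‖) (Finset.mem_univ k0)
    have h0 : 0 < ‖(inner 𝕜 x (y k0) : 𝕜)‖ := norm_pos_iff.mpr hk0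
    linarith
  have hSpos : 0 < S := by
    apply Finset.sum_pos' (fun i _ => norm_nonneg _)
    exact ⟨k0, Finset.mem_univ k0, norm_pos_iff.mpr hk0⟩
  have hBnn : 0 ≤ B := by
    refine le_trans ?_ (Finset.le_sup' _ (Finset.mem_univ k0))
    exact Finset.sum_nonneg fun j _ => norm_nonneg _
  set c : Fin n → 𝕜 := fun k => starRingEnd 𝕜 (inner 𝕜 x (y k)) with hc
  set u : H := ∑ k, c k • y k with hu
  have hxu : (inner 𝕜 x u : 𝕜) = (T : ℝ) := by
    rw [hu, inner_sum]
    rw [hT]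
    push_cast
    refine Finset.sum_congr rfl fun k _ => ?_
    rw [inner_smul_right]
    exact RCLike.conj_mul _
  have hTnn : 0 ≤ T := Finset.sum_nonneg fun k _ => sq_nonneg _
  have h1 : T ≤ ‖x‖ * ‖u‖ := by
    have := norm_inner_le_norm (𝕜 := 𝕜) x u
    rwa [hxu, RCLike.norm_ofReal, abs_of_nonneg hTnn] at this
  have hcn : ∀ i, ‖c i‖ = ‖(inner 𝕜 x (y i) : 𝕜)‖ := fun i => RCLike.norm_conj _
  have hcM : ∀ j, ‖c j‖ ≤ M := fun j => by
    rw [hcn]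
    exact Finset.le_sup' (fun k => ‖(inner 𝕜 x (y k) : 𝕜)‖) (Finset.mem_univ j)
  have e1 : (inner 𝕜 u u : 𝕜) = ∑ i, ∑ j, (starRingEnd 𝕜) (c i) * (c j * inner 𝕜 (y i) (y j)) := by
    rw [hu, sum_inner]
    refine Finset.sum_congr rfl fun i _ => ?_
    rw [inner_sum]
    refine Finset.sum_congr rfl fun j _ => ?_
    rw [inner_smul_left, inner_smul_right]
  have e2 : ‖(inner 𝕜 u u : 𝕜)‖ ≤ ∑ i, ∑ j, ‖c i‖ * (‖c j‖ * ‖(inner 𝕜 (y i) (y j) : 𝕜)‖) := by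
    rw [e1]
    refine (norm_sum_le _ _).trans (Finset.sum_le_sum fun i _ => ?_)
    refine (norm_sum_le _ _).trans (Finset.sum_le_sum fun j _ => le_of_eq ?_)
    rw [norm_mul, norm_mul, RCLike.norm_conj]
  have e3 : ∑ i, ∑ j, ‖c i‖ * (‖c j‖ * ‖(inner 𝕜 (y i) (y j) : 𝕜)‖) ≤ M * S * B := by
    have hrow : ∀ i : Fin n, ∑ j, ‖c i‖ * (‖c j‖ * ‖(inner 𝕜 (y i) (y j) : 𝕜)‖)
        ≤ ‖c i‖ * (M * B) := by
      intro i
      calc ∑ j, ‖c i‖ * (‖c j‖ * ‖(inner 𝕜 (y i) (y j) : 𝕜)‖)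
          ≤ ∑ j, ‖c i‖ * (M * ‖(inner 𝕜 (y i) (y j) : 𝕜)‖) := by
            refine Finset.sum_le_sum fun j _ => ?_
            exact mul_le_mul_of_nonneg_left
              (mul_le_mul_of_nonneg_right (hcM j) (norm_nonneg _)) (norm_nonneg _)
        _ = ‖c i‖ * M * ∑ j, ‖(inner 𝕜 (y i) (y j) : 𝕜)‖ := by
            rw [Finset.mul_sum]; ring_nf
        _ ≤ ‖c i‖ * M * B :=
            mul_le_mul_of_nonneg_left
              (Finset.le_sup' (fun i => ∑ j, ‖(inner 𝕜 (y i) (y j) : 𝕜)‖)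
                (Finset.mem_univ i))
              (mul_nonneg (norm_nonneg _) hMpos.le)
        _ = ‖c i‖ * (M * B) := by ring
    calc ∑ i, ∑ j, ‖c i‖ * (‖c j‖ * ‖(inner 𝕜 (y i) (y j) : 𝕜)‖)
        ≤ ∑ i, ‖c i‖ * (M * B) := Finset.sum_le_sum fun i _ => hrow i
      _ = S * (M * B) := by
          rw [← Finset.sum_mul, hS]
          congr 1
          exact Finset.sum_congr rfl fun i _ => hcn i
      _ = M * S * B := by ring
  have h2 : ‖u‖ ^ 2 ≤ M * S * B := by
    calc ‖u‖ ^ 2 = RCLike.re (inner 𝕜 u u : 𝕜) := norm_sq_eq_re_inner (𝕜 := 𝕜) u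
      _ ≤ ‖(inner 𝕜 u u : 𝕜)‖ := RCLike.re_le_norm _
      _ ≤ M * S * B := e2.trans e3
  have h3 : T ^ 2 ≤ ‖x‖ ^ 2 * ‖u‖ ^ 2 := by
    calc T ^ 2 ≤ (‖x‖ * ‖u‖) ^ 2 := pow_le_pow_left₀ hTnn h1 2
      _ = ‖x‖ ^ 2 * ‖u‖ ^ 2 := by ring
  have h4 : ‖x‖ ^ 2 * ‖u‖ ^ 2 ≤ ‖x‖ ^ 2 * (M * S * B) := by
    exact mul_le_mul_of_nonneg_left h2 (sq_nonneg _)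
  rw [div_le_iff₀ (by positivity)]
  calc T ^ 2 ≤ ‖x‖ ^ 2 * (M * S * B) := h3.trans h4
    _ = ‖x‖ ^ 2 * B * (M * S) := by ring
end

section
/- Let x, y_1, ..., y_n be vectors in an inner product space (H, ⟨·,·⟩) over the real or complex field with not all ⟨x, y_k⟩ = 0, and let p > 1, q > 1 with 1/p + 1/q = 1. Then ( ∑_{k=1}^n |⟨x, y_k⟩|² )² / [ ( ∑_{k=1}^n |⟨x, y_k⟩| ) · ( ∑_{k=1}^n |⟨x, y_k⟩|^p )^{1/p} ] ≤ ‖x‖² · max_{1≤i≤n} { ( ∑_{j=1}^n |⟨y_i, y_j⟩|^q )^{1/q} }. -/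
theorem dragomir_bessel_pq_bound {𝕜 H : Type*} [RCLike 𝕜] [NormedAddCommGroup H]
    [InnerProductSpace 𝕜 H] {n : ℕ} (hn : 0 < n) (x : H) (y : Fin n → H)
    (hx : ∃ k, (inner 𝕜 x (y k) : 𝕜) ≠ 0) {p q : ℝ} (hp : 1 < p) (hq : 1 < q)
    (hpq : 1 / p + 1 / q = 1) :
    (∑ k, ‖(inner 𝕜 x (y k) : 𝕜)‖ ^ 2) ^ 2 /
        ((∑ k, ‖(inner 𝕜 x (y k) : 𝕜)‖) * (∑ k, ‖(inner 𝕜 x (y k) : 𝕜)‖ ^ p) ^ (1 / p)) ≤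
      ‖x‖ ^ 2 *
        Finset.univ.sup' (Finset.univ_nonempty_iff.mpr (Fin.pos_iff_nonempty.mp hn))
          (fun i => (∑ j, ‖(inner 𝕜 (y i) (y j) : 𝕜)‖ ^ q) ^ (1 / q)) := by
  classical
  have hcpq : Real.HolderConjugate p q := ⟨by rw [inv_one, ← one_div, ← one_div]; exact hpq, by linarith, by linarith⟩
  set a : Fin n → ℝ := fun k => ‖(inner 𝕜 x (y k) : 𝕜)‖ with ha
  set b : Fin n → Fin n → ℝ := fun i j => ‖(inner 𝕜 (y i) (y j) : 𝕜)‖ with hb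
  set c : Fin n → 𝕜 := fun k => starRingEnd 𝕜 (inner 𝕜 x (y k)) with hc
  set v : H := ∑ k, c k • y k with hv
  set M : ℝ := Finset.univ.sup' (Finset.univ_nonempty_iff.mpr (Fin.pos_iff_nonempty.mp hn))
      (fun i => (∑ j, b i j ^ q) ^ (1 / q)) with hM
  obtain ⟨k0, hk0⟩ := hx
  have ha_nonneg : ∀ k, 0 ≤ a k := fun k => norm_nonneg _
  have hb_nonneg : ∀ i j, 0 ≤ b i j := fun i j => norm_nonneg _
  have hsum_sq_nonneg : 0 ≤ ∑ k, a k ^ 2 :=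
    Finset.sum_nonneg fun k _ => sq_nonneg _
  have hsum_pos : 0 < ∑ k, a k := by
    refine Finset.sum_pos' (fun k _ => ha_nonneg k) ⟨k0, Finset.mem_univ _, ?_⟩
    exact norm_pos_iff.mpr hk0
  have hsum_p_pos : 0 < ∑ k, a k ^ p :=
    Finset.sum_pos' (fun k _ => Real.rpow_nonneg (ha_nonneg k) p)
      ⟨k0, Finset.mem_univ _, Real.rpow_pos_of_pos (norm_pos_iff.mpr hk0) p⟩
  have hD_pos : 0 < (∑ k, a k) * (∑ k, a k ^ p) ^ (1 / p) :=
    mul_pos hsum_pos (Real.rpow_pos_of_pos hsum_p_pos _)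
  have hM_nonneg : 0 ≤ M := by
    refine le_trans ?_ (Finset.le_sup' _ (Finset.mem_univ k0))
    exact Real.rpow_nonneg (Finset.sum_nonneg fun j _ => Real.rpow_nonneg (hb_nonneg k0 j) q) _
  -- inner 𝕜 x v = sum of squares
  have hxv : (inner 𝕜 x v : 𝕜) = ((∑ k, a k ^ 2 : ℝ) : 𝕜) := by
    rw [hv, inner_sum]
    push_cast
    refine Finset.sum_congr rfl fun k _ => ?_
    rw [inner_smul_right, hc]
    simp only [RCLike.conj_mul, ha]
  have key1 : (∑ k, a k ^ 2) ^ 2 ≤ ‖x‖ ^ 2 * ‖v‖ ^ 2 := by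
    have h1 : ‖(inner 𝕜 x v : 𝕜)‖ ≤ ‖x‖ * ‖v‖ := norm_inner_le_norm x v
    have h2 : ‖(inner 𝕜 x v : 𝕜)‖ = ∑ k, a k ^ 2 := by
      rw [hxv, RCLike.norm_ofReal, abs_of_nonneg hsum_sq_nonneg]
    rw [← h2, ← mul_pow]
    exact pow_le_pow_left₀ (norm_nonneg _) h1 2
  -- bound ‖v‖ ^ 2
  have key2 : ‖v‖ ^ 2 ≤ ∑ i, a i * ∑ j, a j * b i j := by
    have hvv : (inner 𝕜 v v : 𝕜) = ∑ i, ∑ j, (starRingEnd 𝕜 (c i)) * (c j * inner 𝕜 (y i) (y j)) := by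
      rw [hv, sum_inner]
      refine Finset.sum_congr rfl fun i _ => ?_
      rw [inner_smul_left, inner_sum, Finset.mul_sum]
      refine Finset.sum_congr rfl fun j _ => ?_
      rw [inner_smul_right]
    have h1 : ‖v‖ ^ 2 = ‖(inner 𝕜 v v : 𝕜)‖ := by
      rw [@inner_self_eq_norm_sq_to_K 𝕜, norm_pow, RCLike.norm_ofReal, abs_norm]
    rw [h1, hvv]
    calc ‖∑ i, ∑ j, (starRingEnd 𝕜 (c i)) * (c j * inner 𝕜 (y i) (y j))‖
        ≤ ∑ i, ‖∑ j, (starRingEnd 𝕜 (c i)) * (c j * inner 𝕜 (y i) (y j))‖ :=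
          norm_sum_le _ _
      _ ≤ ∑ i, ∑ j, ‖(starRingEnd 𝕜 (c i)) * (c j * inner 𝕜 (y i) (y j))‖ :=
          Finset.sum_le_sum fun i _ => norm_sum_le _ _
      _ = ∑ i, a i * ∑ j, a j * b i j := by
          refine Finset.sum_congr rfl fun i _ => ?_
          rw [Finset.mul_sum]
          refine Finset.sum_congr rfl fun j _ => ?_
          simp only [hc, ha, hb, norm_mul, RCLike.norm_conj]
  -- Hölder per row
  have key3 : ∀ i, ∑ j, a j * b i j ≤ (∑ k, a k ^ p) ^ (1 / p) * M := by
    intro i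
    calc ∑ j, a j * b i j
        ≤ (∑ j, a j ^ p) ^ (1 / p) * (∑ j, b i j ^ q) ^ (1 / q) :=
          Real.inner_le_Lp_mul_Lq_of_nonneg Finset.univ hcpq (fun j _ => ha_nonneg j)
            (fun j _ => hb_nonneg i j)
      _ ≤ (∑ k, a k ^ p) ^ (1 / p) * M := by
          refine mul_le_mul_of_nonneg_left ?_ (Real.rpow_nonneg hsum_p_pos.le _)
          exact Finset.le_sup' (fun i => (∑ j, b i j ^ q) ^ (1 / q)) (Finset.mem_univ i)
  have key4 : ‖v‖ ^ 2 ≤ (∑ k, a k) * ((∑ k, a k ^ p) ^ (1 / p) * M) := by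
    refine key2.trans ?_
    rw [Finset.sum_mul]
    exact Finset.sum_le_sum fun i _ =>
      mul_le_mul_of_nonneg_left (key3 i) (ha_nonneg i)
  rw [div_le_iff₀ hD_pos]
  calc (∑ k, a k ^ 2) ^ 2
      ≤ ‖x‖ ^ 2 * ‖v‖ ^ 2 := key1
    _ ≤ ‖x‖ ^ 2 * ((∑ k, a k) * ((∑ k, a k ^ p) ^ (1 / p) * M)) :=
        mul_le_mul_of_nonneg_left key4 (sq_nonneg _)
    _ = ‖x‖ ^ 2 * M * ((∑ k, a k) * (∑ k, a k ^ p) ^ (1 / p)) := by ring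
end

section
/- If x, y_1, ..., y_n are vectors in an inner product space (H, ⟨·,·⟩) over the real or complex field with not all ⟨x, y_k⟩ = 0, then ( ∑_{k=1}^n |⟨x, y_k⟩|² )² / ( ∑_{k=1}^n |⟨x, y_k⟩| )² ≤ ‖x‖² · max_{1≤i,j≤n} |⟨y_i, y_j⟩|. -/
theorem dragomir_bessel_sup_pair_bound {𝕜 H : Type*} [RCLike 𝕜] [NormedAddCommGroup H]
    [InnerProductSpace 𝕜 H] {n : ℕ} (hn : 0 < n) (x : H) (y : Fin n → H)
    (hx : ∃ k, (inner 𝕜 x (y k) : 𝕜) ≠ 0) :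
    (∑ k, ‖(inner 𝕜 x (y k) : 𝕜)‖ ^ 2) ^ 2 / (∑ k, ‖(inner 𝕜 x (y k) : 𝕜)‖) ^ 2 ≤
      ‖x‖ ^ 2 *
        Finset.univ.sup'
          (Finset.univ_nonempty_iff.mpr
            (by have := Fin.pos_iff_nonempty.mp hn; exact instNonemptyProd))
          (fun ij : Fin n × Fin n => ‖(inner 𝕜 (y ij.1) (y ij.2) : 𝕜)‖) := by
  have hne : (Finset.univ : Finset (Fin n × Fin n)).Nonempty :=
    Finset.univ_nonempty_iff.mpr
      (by have := Fin.pos_iff_nonempty.mp hn; exact instNonemptyProd)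
  set a : Fin n → 𝕜 := fun k => inner 𝕜 x (y k) with ha
  set M : ℝ := Finset.univ.sup' hne
      (fun ij : Fin n × Fin n => ‖(inner 𝕜 (y ij.1) (y ij.2) : 𝕜)‖) with hM
  have hMle : ∀ i j : Fin n, ‖(inner 𝕜 (y i) (y j) : 𝕜)‖ ≤ M := fun i j =>
    Finset.le_sup' (f := fun ij : Fin n × Fin n => ‖(inner 𝕜 (y ij.1) (y ij.2) : 𝕜)‖)
      (Finset.mem_univ (i, j))
  obtain ⟨k0, hk0⟩ := hx
  have hM0 : 0 ≤ M := le_trans (norm_nonneg _) (hMle k0 k0)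
  set z : H := ∑ k, (starRingEnd 𝕜 (a k)) • y k with hz
  have hS : 0 < ∑ k, ‖a k‖ :=
    Finset.sum_pos' (fun i _ => norm_nonneg _)
      ⟨k0, Finset.mem_univ k0, norm_pos_iff.2 hk0⟩
  have hxz : (inner 𝕜 x z : 𝕜) = ((∑ k, ‖a k‖ ^ 2 : ℝ) : 𝕜) := by
    rw [hz, inner_sum]
    push_cast
    refine Finset.sum_congr rfl fun k _ => ?_
    rw [inner_smul_right]
    exact RCLike.conj_mul (a k)
  have h1 : (∑ k, ‖a k‖ ^ 2) ≤ ‖x‖ * ‖z‖ := by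
    have := norm_inner_le_norm (𝕜 := 𝕜) x z
    rw [hxz, RCLike.norm_ofReal, abs_of_nonneg
      (Finset.sum_nonneg fun k _ => sq_nonneg _)] at this
    exact this
  have hzz : (inner 𝕜 z z : 𝕜) = ∑ i, ∑ j, a i * (starRingEnd 𝕜 (a j) * inner 𝕜 (y i) (y j)) := by
    rw [hz, sum_inner]
    refine Finset.sum_congr rfl fun i _ => ?_
    rw [inner_smul_left, inner_sum, Finset.mul_sum]
    refine Finset.sum_congr rfl fun j _ => ?_
    rw [inner_smul_right, RingHomCompTriple.comp_apply, RingHom.id_apply]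
  have h2 : ‖z‖ ^ 2 ≤ (∑ k, ‖a k‖) ^ 2 * M := by
    have hn1 : ‖z‖ ^ 2 ≤ ‖(inner 𝕜 z z : 𝕜)‖ := by
      rw [← inner_self_eq_norm_sq (𝕜 := 𝕜) z]
      exact RCLike.re_le_norm _
    refine hn1.trans ?_
    calc ‖(inner 𝕜 z z : 𝕜)‖
        ≤ ∑ i, ∑ j, ‖a i‖ * (‖a j‖ * M) := by
          rw [hzz]
          refine (norm_sum_le _ _).trans (Finset.sum_le_sum fun i _ => ?_)
          refine (norm_sum_le _ _).trans (Finset.sum_le_sum fun j _ => ?_)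
          rw [norm_mul, norm_mul, RCLike.norm_conj]
          exact mul_le_mul_of_nonneg_left
            (mul_le_mul_of_nonneg_left (hMle i j) (norm_nonneg _)) (norm_nonneg _)
      _ = (∑ k, ‖a k‖) ^ 2 * M := by
          rw [sq, Finset.sum_mul_sum]
          rw [Finset.sum_mul]
          refine Finset.sum_congr rfl fun i _ => ?_
          rw [Finset.sum_mul]
          refine Finset.sum_congr rfl fun j _ => ?_
          ring
  have hA2 : (∑ k, ‖a k‖ ^ 2) ^ 2 ≤ ‖x‖ ^ 2 * ((∑ k, ‖a k‖) ^ 2 * M) := by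
    calc (∑ k, ‖a k‖ ^ 2) ^ 2 ≤ (‖x‖ * ‖z‖) ^ 2 := by
          apply pow_le_pow_left₀ (Finset.sum_nonneg fun k _ => sq_nonneg _) h1
      _ = ‖x‖ ^ 2 * ‖z‖ ^ 2 := by ring
      _ ≤ ‖x‖ ^ 2 * ((∑ k, ‖a k‖) ^ 2 * M) :=
          mul_le_mul_of_nonneg_left h2 (sq_nonneg _)
  rw [div_le_iff₀ (by positivity)]
  calc (∑ k, ‖a k‖ ^ 2) ^ 2 ≤ ‖x‖ ^ 2 * ((∑ k, ‖a k‖) ^ 2 * M) := hA2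
    _ = ‖x‖ ^ 2 * M * (∑ k, ‖a k‖) ^ 2 := by ring
end

section
/- Main Bessel-type estimate (Theorem 2.1, inequality): Let (H, ⟨·,·⟩) be an inner product space over the real or complex field 𝕂, let γ, Γ ∈ 𝕂 with Γ ≠ −γ, and let x, y_1, ..., y_n ∈ H be such that |⟨x, y_j⟩ − (γ + Γ)/2| ≤ (1/2)|Γ − γ| for each j ∈ {1, ..., n}. Then ( ∑_{j=1}^n |⟨x, y_j⟩|² )^{1/2} ≤ (1/√n) ‖x‖ ‖∑_{j=1}^n y_j‖ + (√n / 4) · |Γ − γ|² / |Γ + γ|. -/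
/-- Main Bessel-type estimate (Theorem 2.1, inequality). -/
theorem bessel_type_estimate {𝕜 H : Type*} [RCLike 𝕜] [NormedAddCommGroup H]
    [InnerProductSpace 𝕜 H] {n : ℕ} (hn : 0 < n) (γ Γ : 𝕜) (hΓγ : Γ ≠ -γ)
    (x : H) (y : Fin n → H)
    (h : ∀ j, ‖(inner 𝕜 x (y j) : 𝕜) - (γ + Γ) / 2‖ ≤ (1 / 2) * ‖Γ - γ‖) :
    Real.sqrt (∑ j, ‖(inner 𝕜 x (y j) : 𝕜)‖ ^ 2) ≤
      (1 / Real.sqrt n) * ‖x‖ * ‖∑ j, y j‖ +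
        (Real.sqrt n / 4) * (‖Γ - γ‖ ^ 2 / ‖Γ + γ‖) := by
  set w : 𝕜 := γ + Γ with hwdef
  have hw : w ≠ 0 := by
    intro h0
    apply hΓγ
    have : Γ = -γ := by
      have := h0
      rw [hwdef] at this
      linear_combination this
    exact this
  set c : ℝ := ‖w‖ with hcdef
  have hc : 0 < c := norm_pos_iff.mpr hw
  set d : ℝ := ‖Γ - γ‖ with hddef
  set A : 𝕜 := inner 𝕜 x (∑ j, y j) with hAdef
  have hA : A = ∑ j, (inner 𝕜 x (y j) : 𝕜) := inner_sum _ _ _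
  -- per-index bound
  have key : ∀ j, ‖(inner 𝕜 x (y j) : 𝕜)‖ ^ 2 ≤
      RCLike.re (starRingEnd 𝕜 w * inner 𝕜 x (y j)) - c ^ 2 / 4 + d ^ 2 / 4 := by
    intro j
    have h1 := h j
    set a : 𝕜 := inner 𝕜 x (y j) with hadef
    have h2 : ‖2 * a - w‖ ≤ d := by
      have e : (2 : 𝕜) * a - w = 2 * (a - w / 2) := by ring
      rw [e, norm_mul]
      have : ‖(2 : 𝕜)‖ = 2 := by simp
      rw [this]
      nlinarith [h1]
    have h2' : ‖2 * a - w‖ ^ 2 ≤ d ^ 2 := by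
      have hd : (0 : ℝ) ≤ d := norm_nonneg _
      nlinarith [norm_nonneg (2 * a - w)]
    have e1 : ‖a‖ ^ 2 = RCLike.re a ^ 2 + RCLike.im a ^ 2 := by
      rw [RCLike.norm_sq_eq_def]; ring
    have e2 : ‖2 * a - w‖ ^ 2 = (2 * RCLike.re a - RCLike.re w) ^ 2 +
        (2 * RCLike.im a - RCLike.im w) ^ 2 := by
      rw [RCLike.norm_sq_eq_def]
      simp only [map_sub, RCLike.mul_re, RCLike.mul_im, RCLike.ofNat_re, RCLike.ofNat_im]
      ring
    have e3 : RCLike.re (starRingEnd 𝕜 w * a) =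
        RCLike.re w * RCLike.re a + RCLike.im w * RCLike.im a := by
      simp only [RCLike.mul_re, RCLike.conj_re, RCLike.conj_im]
      ring
    have e4 : c ^ 2 = RCLike.re w ^ 2 + RCLike.im w ^ 2 := by
      rw [hcdef, RCLike.norm_sq_eq_def]; ring
    rw [e1, e3, e4]
    rw [e2] at h2'
    nlinarith [h2']
  -- summed bound
  have sum1 : (∑ j, ‖(inner 𝕜 x (y j) : 𝕜)‖ ^ 2) ≤
      RCLike.re (starRingEnd 𝕜 w * A) - (n : ℝ) * c ^ 2 / 4 + (n : ℝ) * d ^ 2 / 4 := by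
    calc (∑ j, ‖(inner 𝕜 x (y j) : 𝕜)‖ ^ 2)
        ≤ ∑ j, (RCLike.re (starRingEnd 𝕜 w * inner 𝕜 x (y j)) - c ^ 2 / 4 + d ^ 2 / 4) :=
          Finset.sum_le_sum fun j _ => key j
      _ = RCLike.re (starRingEnd 𝕜 w * A) - (n : ℝ) * c ^ 2 / 4 + (n : ℝ) * d ^ 2 / 4 := by
          rw [Finset.sum_add_distrib, Finset.sum_sub_distrib, hA, Finset.mul_sum, map_sum]
          simp [Finset.card_fin]
          ring
  have hre : RCLike.re (starRingEnd 𝕜 w * A) ≤ c * (‖x‖ * ‖∑ j, y j‖) := by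
    calc RCLike.re (starRingEnd 𝕜 w * A) ≤ ‖starRingEnd 𝕜 w * A‖ := RCLike.re_le_norm _
      _ = c * ‖A‖ := by rw [norm_mul, RCLike.norm_conj]
      _ ≤ c * (‖x‖ * ‖∑ j, y j‖) := by
          apply mul_le_mul_of_nonneg_left _ hc.le
          exact norm_inner_le_norm x _
  -- final arithmetic
  set S2 : ℝ := ∑ j, ‖(inner 𝕜 x (y j) : 𝕜)‖ ^ 2 with hS2def
  have hS2 : 0 ≤ S2 := Finset.sum_nonneg fun j _ => sq_nonneg _
  set S : ℝ := Real.sqrt S2 with hSdef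
  have hSsq : S ^ 2 = S2 := Real.sq_sqrt hS2
  have hSpos : 0 ≤ S := Real.sqrt_nonneg _
  set sn : ℝ := Real.sqrt n with hsndef
  have hsn : 0 < sn := Real.sqrt_pos.mpr (by exact_mod_cast hn)
  have hsnsq : sn ^ 2 = n := Real.sq_sqrt (Nat.cast_nonneg n)
  have hgoalnorm : ‖Γ + γ‖ = c := by rw [hcdef, hwdef, add_comm]
  rw [hgoalnorm]
  have hfin : S * (sn * c) ≤
      ((1 / sn) * ‖x‖ * ‖∑ j, y j‖ + (sn / 4) * (d ^ 2 / c)) * (sn * c) := by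
    have expand : ((1 / sn) * ‖x‖ * ‖∑ j, y j‖ + (sn / 4) * (d ^ 2 / c)) * (sn * c) =
        c * (‖x‖ * ‖∑ j, y j‖) + sn ^ 2 * d ^ 2 / 4 := by
      field_simp
    rw [expand]
    have hS2le : S2 ≤ c * (‖x‖ * ‖∑ j, y j‖) - (n : ℝ) * c ^ 2 / 4 + (n : ℝ) * d ^ 2 / 4 :=
      le_trans sum1 (by linarith)
    nlinarith [sq_nonneg (S - sn * c / 2), hsnsq, hSsq]
  exact le_of_mul_le_mul_right hfin (mul_pos hsn hc)
end

section
/- Second Bessel-type estimate (Theorem 2.2, inequality): Let (H, ⟨·,·⟩) be an inner product space over the real or complex field 𝕂, let γ, Γ ∈ 𝕂 with Re(Γ γ̄) > 0, and let x, y_1, ..., y_n ∈ H be such that |⟨x, y_j⟩ − (γ + Γ)/2| ≤ (1/2)|Γ − γ| for each j ∈ {1, ..., n}. Then ∑_{j=1}^n |⟨x, y_j⟩|² ≤ (1/n) · ( |Γ + γ|² / (4 Re(Γ γ̄)) ) · ‖∑_{j=1}^n y_j‖² · ‖x‖². -/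
/-- Second Bessel-type estimate (Theorem 2.2, inequality). -/
theorem bessel_type_estimate_second {𝕜 H : Type*} [RCLike 𝕜] [NormedAddCommGroup H]
    [InnerProductSpace 𝕜 H] {n : ℕ} (hn : 0 < n) (γ Γ : 𝕜)
    (hΓγ : 0 < RCLike.re (Γ * starRingEnd 𝕜 γ)) (x : H) (y : Fin n → H)
    (h : ∀ j, ‖(inner 𝕜 x (y j) : 𝕜) - (γ + Γ) / 2‖ ≤ (1 / 2) * ‖Γ - γ‖) :
    ∑ j, ‖(inner 𝕜 x (y j) : 𝕜)‖ ^ 2 ≤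
      (1 / n) * (‖Γ + γ‖ ^ 2 / (4 * RCLike.re (Γ * starRingEnd 𝕜 γ))) *
        ‖∑ j, y j‖ ^ 2 * ‖x‖ ^ 2 := by
  set a : Fin n → 𝕜 := fun j => inner 𝕜 x (y j) with ha
  set r : ℝ := RCLike.re (Γ * starRingEnd 𝕜 γ) with hr
  have key : ∀ j, ‖a j‖ ^ 2 + r ≤ RCLike.re (starRingEnd 𝕜 (Γ + γ) * a j) := by
    intro j
    have h2 : ‖2 * a j - (γ + Γ)‖ ≤ ‖Γ - γ‖ := by
      have e : 2 * a j - (γ + Γ) = 2 * (a j - (γ + Γ) / 2) := by ring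
      have : ‖2 * a j - (γ + Γ)‖ = 2 * ‖a j - (γ + Γ) / 2‖ := by
        rw [e, norm_mul]; norm_num
      rw [this]
      have := h j
      linarith
    have h3 : ‖2 * a j - (γ + Γ)‖ ^ 2 ≤ ‖Γ - γ‖ ^ 2 :=
      pow_le_pow_left₀ (norm_nonneg _) h2 2
    simp only [hr, RCLike.norm_sq_eq_def, map_sub, map_add, RCLike.mul_re, RCLike.mul_im,
      RCLike.conj_re, RCLike.conj_im, RCLike.ofNat_re, RCLike.ofNat_im] at h3 ⊢
    nlinarith [h3]
  have hS : (∑ j, a j) = (inner 𝕜 x (∑ j, y j) : 𝕜) := (inner_sum _ _ _).symm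
  have hsum : (∑ j, ‖a j‖ ^ 2) + n * r ≤ ‖Γ + γ‖ * (‖x‖ * ‖∑ j, y j‖) := by
    have h1 : (∑ j, (‖a j‖ ^ 2 + r)) ≤ ∑ j, RCLike.re (starRingEnd 𝕜 (Γ + γ) * a j) :=
      Finset.sum_le_sum fun j _ => key j
    have h2 : (∑ j, (‖a j‖ ^ 2 + r)) = (∑ j, ‖a j‖ ^ 2) + n * r := by
      rw [Finset.sum_add_distrib, Finset.sum_const, Finset.card_univ, Fintype.card_fin,
        nsmul_eq_mul]
    have h3 : (∑ j, RCLike.re (starRingEnd 𝕜 (Γ + γ) * a j))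
        = RCLike.re (starRingEnd 𝕜 (Γ + γ) * ∑ j, a j) := by
      rw [Finset.mul_sum, map_sum]
    have h4 : RCLike.re (starRingEnd 𝕜 (Γ + γ) * ∑ j, a j)
        ≤ ‖Γ + γ‖ * (‖x‖ * ‖∑ j, y j‖) := by
      calc RCLike.re (starRingEnd 𝕜 (Γ + γ) * ∑ j, a j)
          ≤ ‖starRingEnd 𝕜 (Γ + γ) * ∑ j, a j‖ := RCLike.re_le_norm _
        _ = ‖Γ + γ‖ * ‖(inner 𝕜 x (∑ j, y j) : 𝕜)‖ := by
            rw [norm_mul, RCLike.norm_conj, hS]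
        _ ≤ ‖Γ + γ‖ * (‖x‖ * ‖∑ j, y j‖) := by
            gcongr
            exact norm_inner_le_norm _ _
    linarith [h2 ▸ h1, h3 ▸ h4]
  set A : ℝ := ∑ j, ‖a j‖ ^ 2 with hA
  have hA0 : 0 ≤ A := Finset.sum_nonneg fun j _ => by positivity
  have hB0 : (0:ℝ) < n * r := by positivity
  set C : ℝ := ‖Γ + γ‖ * (‖x‖ * ‖∑ j, y j‖) with hC
  have hC0 : 0 ≤ C := by positivity
  have h4 : A * (4 * (n * r)) ≤ C ^ 2 := by nlinarith [sq_nonneg (A - n * r)]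
  have hfin : A ≤ C ^ 2 / (4 * (n * r)) := by
    rw [le_div_iff₀ (by positivity)]; exact h4
  have hrw : (1 / (n:ℝ)) * (‖Γ + γ‖ ^ 2 / (4 * r)) * ‖∑ j, y j‖ ^ 2 * ‖x‖ ^ 2
      = C ^ 2 / (4 * (n * r)) := by
    have hn' : (n:ℝ) ≠ 0 := Nat.cast_ne_zero.mpr hn.ne'
    have hr' : r ≠ 0 := ne_of_gt hΓγ
    field_simp [hC]
    ring
  rw [hrw]
  exact hfin
end

section
/- Reverse triangle-type inequalities for complex numbers: Let z_1, ..., z_n, γ, Γ ∈ ℂ satisfy |z_j − (γ + Γ)/2| ≤ (1/2)|Γ − γ| for each j ∈ {1, ..., n}. (a) If Γ ≠ −γ, then ( ∑_{j=1}^n |z_j|² )^{1/2} ≤ (1/√n) |∑_{j=1}^n z_j| + (√n / 4) · |Γ − γ|² / |Γ + γ|. (b) If Re(Γ γ̄) > 0, then ∑_{j=1}^n |z_j|² ≤ (1/n) · ( |Γ + γ|² / (4 Re(Γ γ̄)) ) · |∑_{j=1}^n z_j|². -/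
set_option maxHeartbeats 1000000

/-- Reverse triangle-type inequalities for complex numbers. -/
theorem reverse_triangle_complex {n : ℕ} (hn : 0 < n) (z : Fin n → ℂ) (γ Γ : ℂ)
    (h : ∀ j, ‖z j - (γ + Γ) / 2‖ ≤ (1 / 2) * ‖Γ - γ‖) :
    (Γ ≠ -γ →
        Real.sqrt (∑ j, ‖z j‖ ^ 2) ≤
          (1 / Real.sqrt n) * ‖∑ j, z j‖ +
            (Real.sqrt n / 4) * (‖Γ - γ‖ ^ 2 / ‖Γ + γ‖)) ∧
      (0 < (Γ * starRingEnd ℂ γ).re →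
        ∑ j, ‖z j‖ ^ 2 ≤
          (1 / n) * (‖Γ + γ‖ ^ 2 / (4 * (Γ * starRingEnd ℂ γ).re)) * ‖∑ j, z j‖ ^ 2) := by
  set r : ℝ := (Γ * starRingEnd ℂ γ).re with hr
  have key : ∀ j, ‖z j‖ ^ 2 + r ≤ (starRingEnd ℂ (γ + Γ) * z j).re := by
    intro j
    have h1 := h j
    have h2 : ‖z j - (γ + Γ) / 2‖ ^ 2 ≤ ((1/2) * ‖Γ - γ‖) ^ 2 :=
      pow_le_pow_left₀ (norm_nonneg _) h1 2
    have e1 : ‖z j - (γ + Γ) / 2‖ ^ 2 = Complex.normSq (z j - (γ + Γ) / 2) := by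
      rw [← Complex.sq_norm]
    have e2 : ‖Γ - γ‖ ^ 2 = Complex.normSq (Γ - γ) := by rw [← Complex.sq_norm]
    have e3 : ‖z j‖ ^ 2 = Complex.normSq (z j) := by rw [← Complex.sq_norm]
    rw [e1, mul_pow, e2] at h2
    rw [e3, hr]
    simp only [Complex.normSq_apply, Complex.sub_re, Complex.sub_im, Complex.add_re,
      Complex.add_im, Complex.div_re, Complex.div_im, Complex.mul_re, Complex.mul_im,
      Complex.conj_re, Complex.conj_im, Complex.normSq_ofNat, Complex.ofReal_re,
      Complex.re_ofNat, Complex.im_ofNat, mul_pow] at h2 ⊢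
    nlinarith [h2]
  set S : ℝ := ∑ j, ‖z j‖ ^ 2 with hSdef
  set T : ℝ := ‖∑ j, z j‖ with hTdef
  set A : ℝ := ‖Γ + γ‖ with hAdef
  set B : ℝ := ‖Γ - γ‖ with hBdef
  have hS0 : 0 ≤ S := Finset.sum_nonneg fun j _ => by positivity
  have hT0 : 0 ≤ T := norm_nonneg _
  have hA0 : 0 ≤ A := norm_nonneg _
  have hB0 : 0 ≤ B := norm_nonneg _
  have hgΓ : ‖γ + Γ‖ = A := by rw [hAdef, add_comm]
  have hsum : S + n * r ≤ A * T := by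
    have c1 : S + n * r = ∑ j, (‖z j‖ ^ 2 + r) := by
      rw [Finset.sum_add_distrib, Finset.sum_const, Finset.card_univ, Fintype.card_fin,
        nsmul_eq_mul]
    have c2 : ∑ j, (‖z j‖ ^ 2 + r) ≤ ∑ j, (starRingEnd ℂ (γ + Γ) * z j).re :=
      Finset.sum_le_sum fun j _ => key j
    have c3 : ∑ j, (starRingEnd ℂ (γ + Γ) * z j).re
        = (starRingEnd ℂ (γ + Γ) * ∑ j, z j).re := by
      rw [Finset.mul_sum, Complex.re_sum]
    have c4 : (starRingEnd ℂ (γ + Γ) * ∑ j, z j).re ≤ A * T := by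
      refine le_trans (Complex.re_le_norm _) ?_
      rw [norm_mul, Complex.norm_conj, hgΓ]
    linarith [c2, c3 ▸ c4]
  have hid : 4 * r = A ^ 2 - B ^ 2 := by
    have e1 : A ^ 2 = Complex.normSq (Γ + γ) := by rw [hAdef, ← Complex.sq_norm]
    have e2 : B ^ 2 = Complex.normSq (Γ - γ) := by rw [hBdef, ← Complex.sq_norm]
    rw [e1, e2, hr]
    simp only [Complex.normSq_apply, Complex.add_re, Complex.add_im, Complex.sub_re,
      Complex.sub_im, Complex.mul_re, Complex.conj_re, Complex.conj_im]
    ring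
  have hnR : (0:ℝ) < n := Nat.cast_pos.mpr hn
  clear_value r S T A B
  clear h key
  constructor
  · intro hne
    have hA : 0 < A := by
      rw [hAdef, norm_pos_iff]
      intro hc
      exact hne (by linear_combination hc)
    set s : ℝ := Real.sqrt S with hs
    set t : ℝ := Real.sqrt n with ht
    have hs0 : 0 ≤ s := Real.sqrt_nonneg _
    have hs2 : s ^ 2 = S := Real.sq_sqrt hS0
    have ht2 : t ^ 2 = n := Real.sq_sqrt (le_of_lt hnR)
    have ht0 : 0 < t := Real.sqrt_pos.mpr hnR
    clear_value s t
    have amgm : t * A * s ≤ S + n * A ^ 2 / 4 := by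
      nlinarith [sq_nonneg (2 * s - t * A), hs2, ht2]
    have final : t * A * s ≤ A * T + n * B ^ 2 / 4 := by nlinarith [hsum, hid]
    have h5 : s ≤ (A * T + n * B ^ 2 / 4) / (t * A) := by
      rw [le_div_iff₀ (by positivity)]
      nlinarith [final]
    calc s ≤ (A * T + n * B ^ 2 / 4) / (t * A) := h5
      _ = (1 / t) * T + (t / 4) * (B ^ 2 / A) := by
          rw [← ht2]; field_simp
  · intro hrpos
    have hsq : (S + n * r) * (S + n * r) ≤ (A * T) * (A * T) :=
      mul_self_le_mul_self (by positivity) hsum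
    have hb : 4 * (n:ℝ) * r * S ≤ A ^ 2 * T ^ 2 := by
      nlinarith [hsq, sq_nonneg (S - n * r)]
    calc S ≤ A ^ 2 * T ^ 2 / (4 * n * r) := by
          rw [le_div_iff₀ (by positivity)]; nlinarith [hb]
      _ = (1 / n) * (A ^ 2 / (4 * r)) * T ^ 2 := by
          ring
end
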